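/- arXiv:2403.17971 — 13 statements merged into one kernel-verified Lean document; each statement's English description precedes it below -/
import Mathlib

section
/- Let D be a noncommutative alternative division ring in which 2 ≠ 0 (i.e., (1+1 : D) ≠ 0), and let f : D → D be an additive map such that f(x) = -(x*x)*f(x⁻¹) for every nonzero x ∈ D. Then f(x) = 0 for all x ∈ D. -/
/-- An alternative division ring: a unital non-associative ring satisfying the
left and right alternative laws, with `1 ≠ 0`, in which every nonzero element
has a two-sided inverse. -/
class AlternativeDivisionRing (D : Type*) extends NonAssocRing D, Inv D where
  one_ne_zero : (1 : D) ≠ 0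
  alt_left : ∀ x y : D, (x * x) * y = x * (x * y)
  alt_right : ∀ x y : D, (y * x) * x = y * (x * x)
  mul_inv_cancel : ∀ x : D, x ≠ 0 → x * x⁻¹ = 1
  inv_mul_cancel : ∀ x : D, x ≠ 0 → x⁻¹ * x = 1

namespace AltAux

variable {D : Type*} [AlternativeDivisionRing D]

def As (a b c : D) : D := a * b * c - a * (b * c)

lemma mul3_eq (a b c : D) : a * (b * c) = a * b * c - As a b c := by
  simp [As]

lemma As_ll (a b : D) : As a a b = 0 := by
  simp [As, AlternativeDivisionRing.alt_left]

lemma As_rr (a b : D) : As a b b = 0 := by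
  simp [As, AlternativeDivisionRing.alt_right]

lemma As_add1 (a a' b c : D) : As (a + a') b c = As a b c + As a' b c := by
  simp only [As, add_mul]; abel

lemma As_add2 (a b b' c : D) : As a (b + b') c = As a b c + As a b' c := by
  simp only [As, add_mul, mul_add]; abel

lemma As_add3 (a b c c' : D) : As a b (c + c') = As a b c + As a b c' := by
  simp only [As, mul_add]; abel

lemma As_neg1 (a b c : D) : As (-a) b c = - As a b c := by
  simp only [As, neg_mul]; abel

lemma As_neg2 (a b c : D) : As a (-b) c = - As a b c := by
  simp only [As, neg_mul, mul_neg]; abel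

lemma As_swap12 (a b c : D) : As b a c = - As a b c := by
  have h := As_ll (a + b) c
  rw [As_add1, As_add2, As_add2, As_ll, As_ll] at h
  have h' : As b a c + As a b c = 0 := by simpa [add_comm] using h
  exact eq_neg_of_add_eq_zero_left h'

lemma As_swap23 (a b c : D) : As a c b = - As a b c := by
  have h := As_rr a (b + c)
  rw [As_add2, As_add3, As_add3, As_rr, As_rr] at h
  have h' : As a c b + As a b c = 0 := by simpa [add_comm] using h
  exact eq_neg_of_add_eq_zero_left h'

lemma As_cyc (a b c : D) : As b c a = As a b c := by
  have h1 := As_swap12 c b a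
  have h2 := As_swap23 c b a
  have h3 := As_swap12 a c b
  have h4 := As_swap23 a b c
  rw [h1, ← h2, h3, h4, neg_neg]

lemma As_flex (a b : D) : As a b a = 0 := by
  rw [As_swap23, As_ll, neg_zero]

lemma flex (a b : D) : a * b * a = a * (b * a) := by
  have h := As_flex a b
  simp only [As, sub_eq_zero] at h
  exact h

lemma teich (w x y z : D) :
    As (w*x) y z - As w (x*y) z + As w x (y*z) = w * As x y z + As w x y * z := by
  simp only [As, mul_sub, sub_mul]; abel


lemma two_cancel {a b : D} (h2 : (1 + 1 : D) ≠ 0) (h : a + a = b + b) : a = b := by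
  set t : D := (1 + 1 : D)⁻¹ with ht
  have htt : t + t = 1 := by
    have := AlternativeDivisionRing.inv_mul_cancel (1 + 1 : D) h2
    calc t + t = t * (1 + 1) := by rw [mul_add, mul_one]
    _ = 1 := this
  calc a = (t + t) * a := by rw [htt, one_mul]
  _ = t * (a + a) := by rw [add_mul, mul_add]
  _ = t * (b + b) := by rw [h]
  _ = (t + t) * b := by rw [add_mul, mul_add]
  _ = b := by rw [htt, one_mul]

lemma two_cancel0 {a : D} (h2 : (1 + 1 : D) ≠ 0) (h : a + a = 0) : a = 0 :=
  two_cancel h2 (by rw [h, add_zero])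

lemma As_one2 (a c : D) : As a 1 c = 0 := by simp [As]

lemma L7 (a b : D) : As a (a * b) b = 0 := by
  have h := teich a a b b
  rw [As_rr, As_ll, As_ll, As_rr, mul_zero, zero_mul, add_zero] at h
  have : -As a (a*b) b = 0 := by simpa using h
  simpa using this

lemma L7' (a b c : D) : As a (a * b) c + As a (a * c) b = 0 := by
  have h := L7 a (b + c)
  rw [mul_add, As_add2, As_add3, As_add3] at h
  simpa [L7] using h

section Inv

variable (h2 : (1 + 1 : D) ≠ 0) {x : D} (hx : x ≠ 0)

include h2 hx

omit h2 in
lemma inv_ne_zero' : x⁻¹ ≠ 0 := by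
  intro h
  have h1 := AlternativeDivisionRing.mul_inv_cancel x hx
  rw [h, mul_zero] at h1
  exact AlternativeDivisionRing.one_ne_zero h1.symm

lemma As_inv_left (z : D) : As x⁻¹ x z = 0 := by
  set y : D := x⁻¹ with hy
  have hxy : x * y = 1 := AlternativeDivisionRing.mul_inv_cancel x hx
  have hyx : y * x = 1 := AlternativeDivisionRing.inv_mul_cancel x hx
  have hB : ∀ z : D, As y x z = z - y * (x * z) := by
    intro z; simp [As, hyx]
  have hC : ∀ z : D, As x y z = z - x * (y * z) := by
    intro z; simp [As, hxy]
  have s2 : ∀ z : D, As y x (x * z) = 0 := by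
    intro z
    have h := L7' x y z
    rw [hxy, As_one2, zero_add] at h
    rw [← As_cyc y x (x * z)]
    exact h
  have s3 : ∀ z : D, As x y (y * z) = 0 := by
    intro z
    have h := L7' y x z
    rw [hyx, As_one2, zero_add] at h
    rw [← As_cyc x y (y * z)]
    exact h
  have xB : ∀ z : D, x * As y x z = 0 := by
    intro z
    have h1 : x * As y x z = As x y (x * z) := by
      rw [hB z]; simp [As, mul_sub, hxy]
    rw [h1, As_swap12 y x (x * z), s2 z, neg_zero]
  have hxyz : ∀ z : D, x * (y * z) = z + As y x z := by
    intro z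
    have h1 := hC z
    have h3 : As x y z = -As y x z := As_swap12 y x z
    rw [h3, eq_sub_iff_add_eq, neg_add_eq_sub] at h1
    exact eq_add_of_sub_eq h1
  have yB : ∀ z : D, y * As y x z = 0 := by
    intro z
    have h4 : As y x (y * z) = 0 := by
      rw [As_swap12 x y (y * z), s3 z, neg_zero]
    have h5 : y * (x * (y * z)) = y * z := by
      have h := hB (y * z)
      rw [h4] at h
      exact (sub_eq_zero.mp h.symm).symm
    have h6 : y * (x * (y * z)) = y * z + y * As y x z := by
      rw [hxyz z, mul_add]
    have h7 : y * z + y * As y x z = y * z + 0 := by rw [add_zero, ← h6, h5]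
    exact add_left_cancel h7
  have hBB : As y x (As y x z) = As y x z := by
    rw [hB (As y x z), xB z, mul_zero, sub_zero]
  have h8 := hxyz (As y x z)
  rw [yB z, mul_zero, hBB] at h8
  exact two_cancel0 h2 h8.symm

lemma As_inv_left2 (z : D) : As x x⁻¹ z = 0 := by
  rw [As_swap12 x⁻¹ x z, As_inv_left h2 hx z, neg_zero]

lemma lip (z : D) : x⁻¹ * (x * z) = z := by
  have h := As_inv_left h2 hx z
  simp only [As] at h
  rw [sub_eq_zero, AlternativeDivisionRing.inv_mul_cancel x hx, one_mul] at h
  exact h.symm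

lemma lip' (z : D) : x * (x⁻¹ * z) = z := by
  have h := As_inv_left2 h2 hx z
  simp only [As] at h
  rw [sub_eq_zero, AlternativeDivisionRing.mul_inv_cancel x hx, one_mul] at h
  exact h.symm

lemma rip (z : D) : z * x * x⁻¹ = z := by
  have h : As z x x⁻¹ = 0 := by
    rw [← As_cyc z x x⁻¹]
    exact As_inv_left2 h2 hx z
  simp only [As] at h
  rw [sub_eq_zero, AlternativeDivisionRing.mul_inv_cancel x hx, mul_one] at h
  exact h

lemma rip' (z : D) : z * x⁻¹ * x = z := by
  have h : As z x⁻¹ x = 0 := by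
    rw [← As_cyc z x⁻¹ x]
    exact As_inv_left h2 hx z
  simp only [As] at h
  rw [sub_eq_zero, AlternativeDivisionRing.inv_mul_cancel x hx, mul_one] at h
  exact h

lemma inv_inv'' : (x⁻¹)⁻¹ = x := by
  have h := lip h2 (inv_ne_zero' hx) x
  rwa [AlternativeDivisionRing.inv_mul_cancel x hx, mul_one] at h

end Inv


lemma As_cyc' (a b c : D) : As c a b = As a b c := (As_cyc c a b).symm

lemma L8 (a u : D) : As a u (u * a) = 0 := by
  have h := teich a u u a
  rw [As_flex, As_ll, As_rr, mul_zero, zero_mul, add_zero, sub_zero] at h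
  have hz : As (a * u) u a = 0 := by
    rw [As_cyc a (a * u) u]; exact L7 a u
  have h' : As (a * u) u a + As a u (u * a) = 0 := by simpa using h
  rw [hz, zero_add] at h'
  exact h'

lemma L9 (a u : D) : As a u (a * u) = 0 := by
  rw [As_swap12 u a (a * u), L8 u a, neg_zero]

lemma Spol (a b c : D) :
    As a b (a * c) + As a b (c * a) + As a c (a * b) + As a c (b * a) = 0 := by
  have h1 := L9 a (b + c)
  rw [mul_add, As_add2, As_add3, As_add3, L9, L9] at h1
  have g1 : As a b (a * c) + As a c (a * b) = 0 := by simpa using h1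
  have h2 := L8 a (b + c)
  rw [add_mul, As_add2, As_add3, As_add3, L8, L8] at h2
  have g2 : As a b (c * a) + As a c (b * a) = 0 := by simpa using h2
  calc As a b (a*c) + As a b (c*a) + As a c (a*b) + As a c (b*a)
      = (As a b (a*c) + As a c (a*b)) + (As a b (c*a) + As a c (b*a)) := by abel
    _ = 0 := by rw [g1, g2, add_zero]

lemma Qform (a b c : D) :
    As a (b * a) c = As a b (a * c) + As a b (c * a) - As a b c * a := by
  have t := teich b a c a
  rw [As_flex, mul_zero, zero_add] at t
  rw [As_cyc a (b * a) c, As_cyc a b (a * c), As_swap12 a b (c * a),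
      As_swap12 a b c, neg_mul] at t
  have key : As a (b*a) c - (As a b (a*c) + As a b (c*a) - As a b c * a) = 0 := by
    rw [← sub_eq_zero] at t
    rw [← t]; abel
  exact sub_eq_zero.mp key

lemma Qanti (a b c : D) : As a (b * a) c + As a (c * a) b = 0 := by
  rw [Qform a b c, Qform a c b, As_swap23 a b c, neg_mul]
  have sp := Spol a b c
  have key : (As a b (a*c) + As a b (c*a) - As a b c * a) +
      (As a c (a*b) + As a c (b*a) - -(As a b c * a)) -
      (As a b (a*c) + As a b (c*a) + As a c (a*b) + As a c (b*a)) = 0 := by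
    abel
  calc (As a b (a*c) + As a b (c*a) - As a b c * a) +
      (As a c (a*b) + As a c (b*a) - -(As a b c * a))
      = (As a b (a*c) + As a b (c*a) + As a c (a*b) + As a c (b*a)) := by
        rw [← sub_eq_zero]; rw [← key]; all_goals abel
    _ = 0 := sp

lemma chain2 (a b c : D) :
    As (a*b) a c + As a b (a*c) = a * As a b c + As a (c*a) b := by
  have t := teich a c a b
  rw [As_flex, zero_mul, add_zero, As_cyc' a b c] at t
  -- t : As (a*c) a b - As a (c*a) b + As a c (a*b) = a * As a b c
  have e1 : As (a*b) a c = As a c (a*b) := As_cyc' a c (a*b)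
  have e2 : As a b (a*c) = -As a (a*c) b := As_swap23 a (a*c) b
  have e3 : As (a*c) a b = -As a (a*c) b := As_swap12 a (a*c) b
  rw [e3] at t
  rw [e1, e2]
  have key : As a c (a*b) + -As a (a*c) b - (a * As a b c + As a (c*a) b) = 0 := by
    rw [← sub_eq_zero] at t
    rw [← t]; abel
  exact sub_eq_zero.mp key

lemma lmA (h2 : (1 + 1 : D) ≠ 0) (a b c : D) :
    As a (b * a) c = a * As a b c := by
  have t := teich a b a c
  rw [As_flex, zero_mul, add_zero, As_swap12 a b c, mul_neg] at t
  -- t : As (a*b) a c - As a (b*a) c + As a b (a*c) = -(a * As a b c)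
  have c2 := chain2 a b c
  have qa := Qanti a b c
  have key : (As a (b*a) c + As a (b*a) c) = a * As a b c + a * As a b c := by
    have e : As a (c*a) b = -As a (b*a) c := by
      rw [← sub_eq_zero]
      rw [← qa]; abel
    rw [e] at c2
    rw [← sub_eq_zero] at t c2
    rw [← sub_eq_zero]
    calc (As a (b*a) c + As a (b*a) c) - (a * As a b c + a * As a b c)
        = (As (a*b) a c + As a b (a*c) - (a * As a b c + -As a (b*a) c))
          - (As (a*b) a c - As a (b*a) c + As a b (a*c) - -(a * As a b c)) := by abel
      _ = 0 := by rw [c2, t, sub_zero]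
  exact two_cancel h2 key

lemma lm (h2 : (1 + 1 : D) ≠ 0) (a b c : D) :
    a * (b * (a * c)) = a * (b * a) * c := by
  have h := lmA h2 a b c
  have e : As b a c = -As a b c := As_swap12 a b c
  have d2 : a * As b a c = a * ((b*a)*c) - a * (b * (a*c)) := by
    simp only [As, mul_sub]
  rw [e, mul_neg, ← h] at d2
  have d1 : As a (b*a) c = a * (b*a) * c - a * ((b*a)*c) := rfl
  rw [d1] at d2
  -- d2 : -(a*(b*a)*c - a*((b*a)*c)) = a*((b*a)*c) - a*(b*(a*c))
  have key : a * (b * (a * c)) - a * (b * a) * c = 0 := by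
    calc a * (b * (a * c)) - a * (b * a) * c
        = (-(a * (b*a) * c - a * ((b*a)*c))) - (a*((b*a)*c) - a*(b*(a*c))) := by abel
      _ = 0 := by rw [d2, sub_self]
  exact sub_eq_zero.mp key


lemma Nlem (h2 : (1 + 1 : D) ≠ 0) (x w : D) : As (x*x) x w = 0 := by
  have t := teich x x x w
  rw [As_ll x (x*w), As_ll x w, As_ll x x, mul_zero, zero_mul, add_zero] at t
  have t' : As (x*x) x w - As x (x*x) w = 0 := by simpa using t
  rw [As_swap12 (x*x) x w, sub_neg_eq_add] at t'
  exact two_cancel0 h2 t'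

lemma E1form (h2 : (1 + 1 : D) ≠ 0) (x y w : D) :
    As (x*x) y w + As (x*y) x w + As (x*y) y w + As (y*x) x w
      + As (y*x) y w + As (y*y) x w = 0 := by
  have e := Nlem h2 (x+y) w
  have hsq : (x+y)*(x+y) = x*x + x*y + (y*x + y*y) := by
    rw [add_mul, mul_add, mul_add]
  rw [hsq, As_add1, As_add1, As_add1, As_add2, As_add2, As_add2, As_add2,
      Nlem h2 x w, Nlem h2 y w] at e
  have e' := e
  abel_nf at e' ⊢
  exact e'

lemma LC (h2 : (1 + 1 : D) ≠ 0) (x y w : D) :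
    As (x*x) y w + As (x*y + y*x) x w = 0 := by
  have e1 := E1form h2 x y w
  have e2 := E1form h2 (-x) y w
  simp only [neg_mul_neg, neg_mul, mul_neg, As_neg1, As_neg2, neg_neg] at e2
  rw [As_add1]
  apply two_cancel0 h2
  calc (As (x*x) y w + (As (x*y) x w + As (y*x) x w))
        + (As (x*x) y w + (As (x*y) x w + As (y*x) x w))
      = (As (x*x) y w + As (x*y) x w + As (x*y) y w + As (y*x) x w
          + As (y*x) y w + As (y*y) x w)
        + (As (x*x) y w + As (x*y) x w + -As (x*y) y w + As (y*x) x w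
          + -As (y*x) y w + -As (y*y) x w) := by abel
    _ = 0 := by rw [e1, e2, add_zero]

lemma jord (x y z : D) :
    x*(y*z + z*y) - (y*z + z*y)*x =
    ((x*y - y*x)*z + z*(x*y - y*x)) + ((x*z - z*x)*y + y*(x*z - z*x)) := by
  rw [mul_add, add_mul, sub_mul, sub_mul, mul_sub, mul_sub,
      mul3_eq x y z, mul3_eq x z y, mul3_eq z x y, mul3_eq z y x,
      mul3_eq y x z, mul3_eq y z x,
      As_swap23 x y z, As_cyc' x y z, ← As_cyc z y x, As_swap12 x y z,
      As_cyc x y z]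
  abel


lemma central_of (h2 : (1 + 1 : D) ≠ 0) {x : D}
    (hdd : ∀ u : D, x*(x*u - u*x) - (x*u - u*x)*x = 0) (y : D) : x*y = y*x := by
  have dadd : ∀ a : D, x*(a+a) - (a+a)*x = (x*a - a*x) + (x*a - a*x) := by
    intro a; rw [mul_add, add_mul]; abel
  have dsq : x*(y*y) - (y*y)*x = (x*y - y*x)*y + y*(x*y - y*x) := by
    have j := jord x y y
    rw [dadd (y*y)] at j
    exact two_cancel h2 j
  have j2 := jord x (x*y - y*x) y
  rw [hdd y, zero_mul, mul_zero, ← dsq, hdd (y*y)] at j2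
  -- j2 : 0 = (0 + 0) + ((x*y-y*x)*(x*y-y*x) + (x*y-y*x)*(x*y-y*x))
  have hsq0 : (x*y - y*x)*(x*y - y*x) + (x*y - y*x)*(x*y - y*x) = 0 := by
    have := j2.symm
    simpa using this
  have hu2 : (x*y - y*x)*(x*y - y*x) = 0 := two_cancel0 h2 hsq0
  have hu : x*y - y*x = 0 := by
    by_contra hne
    have := lip h2 hne (x*y - y*x)
    rw [hu2, mul_zero] at this
    exact hne this.symm
  rw [sub_eq_zero] at hu
  exact hu

lemma sub_transfer {a b c d : D} (h : c = d) (hab : a - b = c - d) : a = b := by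
  rw [h, sub_self] at hab
  exact sub_eq_zero.mp hab

lemma cleanupE (h2 : (1 + 1 : D) ≠ 0) (x y w : D) :
    ((x*x)*y - (x*(y*x) + x*(y*x)) + y*(x*x)) * w
      = (x*(x*(y*w)) + (y*(x*(x*w)) + y*(x*(x*w))))
        - (x*(y*(x*w)) + (x*y)*(x*w) + (y*x)*(x*w)) := by
  have a1 : x*(x*(y*w)) = (x*x)*y*w - As (x*x) y w := by
    rw [← AlternativeDivisionRing.alt_left]
    exact mul3_eq (x*x) y w
  have a2 : y*(x*(x*w)) = y*(x*x)*w + As (x*x) y w := by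
    rw [← AlternativeDivisionRing.alt_left x w, mul3_eq y (x*x) w, As_swap12 (x*x) y w]
    abel
  have a3 : x*(y*(x*w)) = x*(y*x)*w := by
    rw [mul3_eq y x w, mul_sub, mul3_eq x (y*x) w, lmA h2 x y w, As_swap12 y x w, mul_neg]
    abel
  have a4 : (x*y)*(x*w) = x*(y*x)*w - As (x*y) x w := by
    rw [mul3_eq (x*y) x w, flex x y]
  have a5 : (y*x)*(x*w) = y*(x*x)*w - As (y*x) x w := by
    rw [mul3_eq (y*x) x w, AlternativeDivisionRing.alt_right]
  have lc : As (x*x) y w + (As (x*y) x w + As (y*x) x w) = 0 := by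
    have h := LC h2 x y w
    rwa [As_add1] at h
  have lc' : -(As (x*x) y w + (As (x*y) x w + As (y*x) x w)) = 0 := by
    rw [lc, neg_zero]
  rw [a1, a2, a3, a4, a5, add_mul, sub_mul, add_mul]
  rw [← sub_eq_zero]
  rw [← lc']
  all_goals abel


section Main

variable (h2 : (1 + 1 : D) ≠ 0) (f : D → D)
  (hf : ∀ x y : D, f (x + y) = f x + f y)
  (hid : ∀ x : D, x ≠ 0 → f x = -((x * x) * f x⁻¹))

lemma one_ne : (1 : D) ≠ 0 := AlternativeDivisionRing.one_ne_zero

include hf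

lemma f0 : f 0 = 0 := by
  have h := hf 0 0
  rw [add_zero] at h
  exact (left_eq_add.mp h)

lemma fneg (x : D) : f (-x) = -f x := by
  have h := hf x (-x)
  rw [add_neg_cancel, f0 f hf] at h
  exact eq_neg_of_add_eq_zero_right h.symm

lemma fsub (x y : D) : f (x - y) = f x - f y := by
  rw [sub_eq_add_neg, hf, fneg f hf, ← sub_eq_add_neg]

include h2 hid

lemma f1 : f 1 = 0 := by
  have hinv1 : (1 : D)⁻¹ = 1 := by
    have := AlternativeDivisionRing.mul_inv_cancel (1 : D) one_ne
    rwa [one_mul] at this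
  have h := hid 1 one_ne
  rw [hinv1, one_mul, one_mul] at h
  rw [eq_neg_iff_add_eq_zero] at h
  exact two_cancel0 h2 h

lemma finv {x : D} (hx : x ≠ 0) : f x⁻¹ = -(x⁻¹ * (x⁻¹ * f x)) := by
  have h := hid x⁻¹ (inv_ne_zero' hx)
  rwa [inv_inv'' h2 hx, AlternativeDivisionRing.alt_left] at h

lemma fsq (x : D) : f (x * x) = x * f x + x * f x := by
  by_cases hx0 : x = 0
  · rw [hx0, mul_zero, f0 f hf, zero_mul, add_zero]
  by_cases hx1 : x = 1
  · rw [hx1, mul_one, f1 h2 f hf hid, mul_zero, add_zero]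
  have he : x - 1 ≠ 0 := sub_ne_zero.mpr hx1
  set e : D := x - 1 with hedef
  set F : D := f x with hFdef
  have hex : e * x = x * x - x := by rw [hedef, sub_mul, one_mul]
  have hxe : x * e = x * x - x := by rw [hedef, mul_sub, mul_one]
  set g : D := e⁻¹ - x⁻¹ with hgdef
  have hgh : g * (x * x - x) = 1 := by
    rw [hgdef, sub_mul, ← hex, lip h2 he x,
      show e*x = x*e from hex.trans hxe.symm, lip h2 hx0 e, hedef]
    abel
  have hgne : g ≠ 0 := by
    intro h
    rw [h, zero_mul] at hgh
    exact one_ne hgh.symm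
  have hginv : g⁻¹ = x * x - x := by
    have h := lip h2 hgne (x * x - x)
    rwa [hgh, mul_one] at h
  -- lemmas for left multiplication by (x*x - x)
  have hA : ∀ v : D, (x*x - x) * (e⁻¹ * v) = x * v := by
    intro v
    have hxev : x * (e⁻¹ * v) = v + e⁻¹ * v := by
      have : x = e + 1 := by rw [hedef]; abel
      rw [this, add_mul, one_mul, lip' h2 he v]
    rw [sub_mul, AlternativeDivisionRing.alt_left, hxev, mul_add, hxev]
    abel
  have hBv : ∀ v : D, (x*x - x) * (x⁻¹ * v) = x * v - v := by
    intro v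
    rw [sub_mul, AlternativeDivisionRing.alt_left, lip' h2 hx0 v]
  have hGinv : ∀ v : D, (x*x - x) * (g * v) = v := by
    intro v
    have hgv : g * v = e⁻¹ * v - x⁻¹ * v := by rw [hgdef, sub_mul]
    rw [hgv, mul_sub, hA v, hBv v]
    abel
  -- the master equation
  have hfg : f g = -((g * g) * (f (x*x) - F)) := by
    have h := hid g hgne
    rwa [hginv, fsub f hf (x*x) x, ← hFdef] at h
  have hfg2 : f g = -(e⁻¹ * (e⁻¹ * F)) + x⁻¹ * (x⁻¹ * F) := by
    have hfe : f e = F := by rw [hedef, fsub f hf, f1 h2 f hf hid, sub_zero, hFdef]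
    rw [hgdef, fsub f hf, finv h2 f hf hid he, finv h2 f hf hid hx0, hfe, ← hFdef]
    abel
  set u : D := f (x*x) - F with hudef
  have hmain : g * (g * u) = e⁻¹ * (e⁻¹ * F) - x⁻¹ * (x⁻¹ * F) := by
    have := hfg.symm.trans hfg2
    -- -((g*g)*u) = -(e⁻¹*(e⁻¹*F)) + x⁻¹*(x⁻¹*F)
    rw [AlternativeDivisionRing.alt_left] at this
    have h3 : g * (g * u) = -(-(e⁻¹ * (e⁻¹ * F)) + x⁻¹ * (x⁻¹ * F)) := by
      rw [← this, neg_neg]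
    rw [h3]; abel
  have step1 : (x*x - x) * ((x*x - x) * (g * (g * u))) = u := by
    rw [hGinv (g * u), hGinv u]
  rw [hmain] at step1
  rw [mul_sub, hA (e⁻¹ * F), hBv (x⁻¹ * F), lip' h2 hx0 F] at step1
  -- step1 : (x*x - x) * (x * (e⁻¹*F) - (F - x⁻¹*F)) = u
  have hxeF : x * (e⁻¹ * F) = F + e⁻¹ * F := by
    have : x = e + 1 := by rw [hedef]; abel
    rw [this, add_mul, one_mul, lip' h2 he F]
  rw [hxeF] at step1
  have harg : F + e⁻¹ * F - (F - x⁻¹ * F) = e⁻¹ * F + x⁻¹ * F := by abel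
  rw [harg, mul_add, hA F, hBv F] at step1
  -- step1 : x * F + (x * F - F) = u
  have : f (x*x) = x * F + (x * F - F) + F := by
    rw [step1, hudef]; abel
  rw [this]; abel


lemma fpol (x y : D) :
    f (x*y + y*x) = (x * f y + x * f y) + (y * f x + y * f x) := by
  have h := fsq h2 f hf hid (x+y)
  have hL : (x+y)*(x+y) = x*x + ((x*y + y*x) + y*y) := by
    rw [add_mul, mul_add, mul_add]; abel
  rw [hL, hf (x*x) ((x*y + y*x) + y*y), hf (x*y + y*x) (y*y), fsq h2 f hf hid x,
    fsq h2 f hf hid y, hf x y] at h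
  simp only [mul_add, add_mul] at h
  exact sub_transfer h (by abel)

lemma fcentral {x : D} (hx : x ≠ 0) (hFne : f x ≠ 0) : ∀ y : D, x * y = y * x := by
  have hfinvx : f x⁻¹ = -(x⁻¹ * (x⁻¹ * f x)) := finv h2 f hf hid hx
  have hxw : x * (x⁻¹ * (x⁻¹ * f x)) = x⁻¹ * f x := lip' h2 hx (x⁻¹ * f x)
  have hxxw : x * (x * (x⁻¹ * (x⁻¹ * f x))) = f x := by
    rw [hxw]; exact lip' h2 hx (f x)
  have hB : ∀ z : D, x⁻¹ * f (x*(z*x))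
      = x * f z + z * f x + (x*(z*x)) * (x⁻¹ * (x⁻¹ * f x)) := by
    intro z
    have hp1 : (x*(z*x)) * x⁻¹ = x * z := by
      rw [← flex x z]; exact rip h2 hx (x*z)
    have hp2 : x⁻¹ * (x*(z*x)) = z * x := lip h2 hx (z*x)
    have m4 := fpol h2 f hf hid (x*(z*x)) x⁻¹
    rw [hp1, hp2, hfinvx, mul_neg] at m4
    rw [fpol h2 f hf hid x z] at m4
    apply two_cancel h2
    exact sub_transfer m4.symm (by abel)
  have hB' : ∀ z : D, f (x*(z*x))
      = x * (x * f z) + x * (z * f x) + x * ((x*(z*x)) * (x⁻¹ * (x⁻¹ * f x))) := by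
    intro z
    have h : x * (x⁻¹ * f (x*(z*x)))
        = x * (x * f z + z * f x + (x*(z*x)) * (x⁻¹ * (x⁻¹ * f x))) := by rw [hB z]
    rw [lip' h2 hx (f (x*(z*x))), mul_add, mul_add] at h
    exact h
  have hC : ∀ z : D, f (x*(z*x))
      = x * (x * f z) + (x * (z * f x) + x * (z * f x))
        + ((x*z) * f x + (z*x) * f x) - (z * (x * f x) + z * (x * f x)) := by
    intro z
    have m1 := fpol h2 f hf hid x (x*z + z*x)
    have harg : x*(x*z + z*x) + (x*z + z*x)*x
        = ((x*x)*z + z*(x*x)) + (x*(z*x) + x*(z*x)) := by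
      rw [mul_add, add_mul, ← AlternativeDivisionRing.alt_left x z,
        AlternativeDivisionRing.alt_right, flex x z]
      abel
    rw [harg, hf ((x*x)*z + z*(x*x)) (x*(z*x) + x*(z*x)), hf (x*(z*x)) (x*(z*x)),
      fpol h2 f hf hid (x*x) z, fpol h2 f hf hid x z,
      fsq h2 f hf hid x] at m1
    simp only [mul_add, add_mul] at m1
    rw [AlternativeDivisionRing.alt_left x (f z)] at m1
    apply two_cancel h2
    exact sub_transfer m1 (by abel)
  have hD : ∀ z : D, x * ((x*(z*x)) * (x⁻¹ * (x⁻¹ * f x)))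
      = x * (z * f x) + ((x*z) * f x + (z*x) * f x)
        - (z * (x * f x) + z * (x * f x)) := by
    intro z
    have e := (hB' z).symm.trans (hC z)
    exact sub_transfer e (by abel)
  have hE : ∀ y : D, x * (y * (x⁻¹ * (x⁻¹ * f x)))
      = y * (x⁻¹ * f x) + ((y*x⁻¹) * f x + (x⁻¹*y) * f x)
        - (x⁻¹ * (y * f x) + x⁻¹ * (y * f x)) := by
    intro y
    have hz := hD (x⁻¹*(y*x⁻¹))
    have hzx : (x⁻¹*(y*x⁻¹))*x = x⁻¹*y := by
      rw [← flex x⁻¹ y]; exact rip' h2 hx (x⁻¹*y)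
    have hzF : (x⁻¹*(y*x⁻¹)) * f x = x⁻¹*(y*(x⁻¹ * f x)) := (lm h2 x⁻¹ y (f x)).symm
    have hzxF : (x⁻¹*(y*x⁻¹)) * (x * f x) = x⁻¹*(y * f x) := by
      have h := (lm h2 x⁻¹ y (x * f x)).symm
      rwa [lip h2 hx (f x)] at h
    rw [hzx, lip' h2 hx y, lip' h2 hx (y*x⁻¹), hzF, lip' h2 hx (y*(x⁻¹ * f x)),
      hzxF] at hz
    exact hz
  have hF2 : ∀ y : D, x * (x * (y * (x⁻¹ * (x⁻¹ * f x))))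
      = x * (y * (x * (x⁻¹ * (x⁻¹ * f x))))
        + ((x*y) * (x * (x⁻¹ * (x⁻¹ * f x))) + (y*x) * (x * (x⁻¹ * (x⁻¹ * f x))))
        - (y * f x + y * f x) := by
    intro y
    have e2 : x * ((y*x⁻¹) * f x) = (x*y) * (x * (x⁻¹ * (x⁻¹ * f x))) := by
      have h := lm h2 x (y*x⁻¹) (x * (x⁻¹ * (x⁻¹ * f x)))
      rw [rip' h2 hx y, hxxw] at h
      exact h
    have e3 : x * ((x⁻¹*y) * f x) = (y*x) * (x * (x⁻¹ * (x⁻¹ * f x))) := by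
      have h := lm h2 x (x⁻¹*y) (x * (x⁻¹ * (x⁻¹ * f x)))
      rw [← flex x (x⁻¹*y), lip' h2 hx y, hxxw] at h
      exact h
    have h : x * (x * (y * (x⁻¹ * (x⁻¹ * f x))))
        = x * (y * (x⁻¹ * f x) + ((y*x⁻¹) * f x + (x⁻¹*y) * f x)
            - (x⁻¹ * (y * f x) + x⁻¹ * (y * f x))) := by rw [hE y]
    have e1 : x * (y * (x⁻¹ * f x)) = x * (y * (x * (x⁻¹ * (x⁻¹ * f x)))) := by
      rw [hxw]
    rw [mul_sub, mul_add, mul_add, mul_add, lip' h2 hx (y * f x),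
      e2, e3, e1] at h
    exact h
  have hwne : (x⁻¹ * (x⁻¹ * f x)) ≠ 0 := by
    intro h0
    apply hFne
    rw [← hxxw, h0, mul_zero, mul_zero]
  have Ey0 : ∀ y : D, (x*x)*y - (x*(y*x) + x*(y*x)) + y*(x*x) = 0 := by
    intro y
    have EyW : ((x*x)*y - (x*(y*x) + x*(y*x)) + y*(x*x)) * (x⁻¹ * (x⁻¹ * f x)) = 0 := by
      rw [cleanupE h2 x y (x⁻¹ * (x⁻¹ * f x)), hxxw]
      exact sub_transfer (hF2 y) (by abel)
    by_contra hne
    have h := lip h2 hne (x⁻¹ * (x⁻¹ * f x))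
    rw [EyW, mul_zero] at h
    exact hwne h.symm
  apply central_of h2
  intro u
  have expand : x*(x*u - u*x) - (x*u - u*x)*x
      = (x*x)*u - (x*(u*x) + x*(u*x)) + u*(x*x) := by
    rw [mul_sub, sub_mul, ← AlternativeDivisionRing.alt_left x u,
      AlternativeDivisionRing.alt_right, flex x u]
    abel
  rw [expand]
  exact Ey0 u

end Main

end AltAux

theorem stmt0 (D : Type*) [AlternativeDivisionRing D]
    (hnc : ∃ a b : D, a * b ≠ b * a)
    (h2 : (1 + 1 : D) ≠ 0)
    (f : D → D) (hf : ∀ x y : D, f (x + y) = f x + f y)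
    (hid : ∀ x : D, x ≠ 0 → f x = -((x * x) * f x⁻¹)) :
    ∀ x : D, f x = 0 := by
  intro x
  by_contra hFne
  obtain ⟨a, b, hab⟩ := hnc
  have hcen : ∀ u : D, f u ≠ 0 → ∀ y : D, u * y = y * u := by
    intro u hu y
    have hune : u ≠ 0 := by
      intro h0; apply hu; rw [h0]; exact AltAux.f0 f hf
    exact AltAux.fcentral h2 f hf hid hune hu y
  have hfa : f a = 0 := by
    by_contra hfa'
    exact hab (hcen a hfa' b)
  have hfxa : f (x + a) ≠ 0 := by
    rw [hf, hfa, add_zero]; exact hFne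
  have e1 := hcen (x + a) hfxa b
  have e2 := hcen x hFne b
  rw [add_mul, mul_add, e2] at e1
  exact hab (add_left_cancel e1)
end

section
/- Let A be an alternative ring with 1 and let a, a', b, c ∈ A with a*a' = a'*a = 1. If the associator (a, b, c) = 0, then (a', b, c) = 0. -/
/-- An alternative ring: a unital non-associative ring satisfying the
left and right alternative laws. -/
class AlternativeRing (A : Type*) extends NonAssocRing A where
  alt_left : ∀ x y : A, (x * x) * y = x * (x * y)
  alt_right : ∀ x y : A, (y * x) * x = y * (x * x)

section AltAux

variable {A : Type*} [AlternativeRing A]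

private lemma altL (x y : A) : (x * x) * y = x * (x * y) :=
  AlternativeRing.alt_left x y

private lemma altR (x y : A) : (y * x) * x = y * (x * x) :=
  AlternativeRing.alt_right x y

private lemma altL2 (p q r : A) :
    (p * q) * r + (q * p) * r = p * (q * r) + q * (p * r) := by
  have h := altL (p + q) r
  simp only [add_mul, mul_add] at h
  linear_combination (norm := abel1) h - altL p r - altL q r

private lemma altR2 (p q r : A) :
    (r * p) * q + (r * q) * p = r * (p * q) + r * (q * p) := by
  have h := altR (p + q) r
  simp only [add_mul, mul_add] at h
  linear_combination (norm := abel1) h - altR p r - altR q r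

/-- The associator. -/
private def asc (x y z : A) : A := (x * y) * z - x * (y * z)

private lemma asc_swap12 (x y z : A) : asc x y z = - asc y x z := by
  unfold asc
  linear_combination (norm := abel1) altL2 x y z

private lemma asc_swap23 (x y z : A) : asc x y z = - asc x z y := by
  unfold asc
  linear_combination (norm := abel1) altR2 y z x

private lemma asc_cyclic (x y z : A) : asc x y z = asc y z x := by
  rw [asc_swap12, asc_swap23, neg_neg]

/-- Kleinfeld identity: (x, xy, z) = (x, y, z) x. -/
private lemma kleinfeld1 (x y z : A) : asc x (x * y) z = asc x y z * x := by
  unfold asc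
  linear_combination (norm := (simp only [mul_add, add_mul, mul_sub, sub_mul]; abel1))
    altL x (y * z) + altL2 (x * x) y z - altR2 (x * x) y z - altR2 (x * x) z y + altL2 (x * y) x z - altR2 (x * y) z x - altR2 (x * z) x y - altR2 (y * x) x z + altL2 (y * x) z x - altR2 (y * x) z x + altL2 (z * x) x y - altR2 (z * x) y x + altL2 x y (x * z) + altL2 x y (z * x) + altL2 x z (x * y) + altL2 x z (y * x) + altL2 y z (x * x) - z * (altL x y) - (altL x y) * z + (altR x y) * z + y * (altR x z) - (altR x z) * y - (altL2 x y x) * z - x * (altL2 x y z) - (altL2 x y z) * x - y * (altL2 x z x)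

/-- Mirror Kleinfeld identity: (z, yx, x) = x (z, y, x). -/
private lemma kleinfeld2 (x y z : A) : asc z (y * x) x = x * asc z y x := by
  unfold asc
  linear_combination (norm := (simp only [mul_add, add_mul, mul_sub, sub_mul]; abel1))
    altR x (z * y) + altR2 (x * x) y z - altL2 (x * x) y z - altL2 (x * x) z y + altR2 (y * x) x z - altL2 (y * x) z x - altL2 (z * x) x y - altL2 (x * y) x z + altR2 (x * y) z x - altL2 (x * y) z x + altR2 (x * z) x y - altL2 (x * z) y x + altR2 x y (z * x) + altR2 x y (x * z) + altR2 x z (y * x) + altR2 x z (x * y) + altR2 y z (x * x) - (altR x y) * z - z * (altR x y) + z * (altL x y) + (altL x z) * y - y * (altL x z) - z * (altR2 x y x) - (altR2 x y z) * x - x * (altR2 x y z) - (altR2 x z x) * y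

/-- The Teichmüller identity (valid in any nonassociative ring). -/
private lemma tei (w x y z : A) :
    asc (w * x) y z - asc w (x * y) z + asc w x (y * z)
      = w * asc x y z + asc w x y * z := by
  unfold asc
  simp only [mul_sub, sub_mul]
  abel

end AltAux

theorem stmt2 (A : Type*) [AlternativeRing A] (a a' b c : A)
    (h1 : a * a' = 1) (h2 : a' * a = 1)
    (h : (a * b) * c - a * (b * c) = 0) :
    (a' * b) * c - a' * (b * c) = 0 := by
  have ascm1 : ∀ u w : A, asc u (1 : A) w = 0 := by
    intro u w; simp [asc]
  have asc1 : ∀ u w : A, asc (1 : A) u w = 0 := by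
    intro u w; simp [asc]
  -- write g w = asc a' a w; we show g w is annihilated by a, a' on both sides
  have ga : ∀ w : A, asc a' a w * a = 0 := by
    intro w
    have k := kleinfeld1 a a' w
    rw [h1, ascm1, asc_swap12 a a' w, neg_mul] at k
    exact neg_eq_zero.mp k.symm
  have ga' : ∀ w : A, asc a' a w * a' = 0 := by
    intro w
    have k := kleinfeld1 a' a w
    rw [h2, ascm1] at k
    exact k.symm
  have ag : ∀ w : A, a * asc a' a w = 0 := by
    intro w
    have k := kleinfeld2 a a' w
    rw [h2, ascm1, asc_cyclic w a' a] at k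
    exact k.symm
  have a'g : ∀ w : A, a' * asc a' a w = 0 := by
    intro w
    have k := kleinfeld2 a' a w
    rw [h1, ascm1, asc_cyclic w a a', asc_swap12 a a' w, mul_neg] at k
    exact neg_eq_zero.mp k.symm
  -- inverse property: g = 0
  have gzero : ∀ w : A, asc a' a w = 0 := by
    intro w
    have e1 : asc a' (asc a' a w) a = 0 := by
      show (a' * asc a' a w) * a - a' * (asc a' a w * a) = 0
      rw [a'g w, ga w, zero_mul, mul_zero, sub_zero]
    have e2 : asc a' (asc a' a w) a = - asc a' a w := by
      rw [asc_cyclic]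
      show (asc a' a w * a) * a' - asc a' a w * (a * a') = - asc a' a w
      rw [ga w, zero_mul, h1, mul_one, zero_sub]
    rw [e1] at e2
    exact neg_eq_zero.mp e2.symm
  have inv : ∀ w : A, a' * (a * w) = w := by
    intro w
    have g := gzero w
    have g' : (a' * a) * w - a' * (a * w) = 0 := g
    rw [h2, one_mul, sub_eq_zero] at g'
    exact g'.symm
  -- Teichmüller at (a', a, b, c) gives (a', ab, c) = 0
  have hac : asc a b c = 0 := h
  have step1 : asc a' (a * b) c = 0 := by
    have t := tei a' a b c
    rw [h2, asc1, gzero (b * c), gzero b, hac, mul_zero, zero_mul, add_zero,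
      zero_sub, add_zero] at t
    exact neg_eq_zero.mp t
  -- Kleinfeld at (a', a'(ab) = b, c) finishes
  have k := kleinfeld1 a' (a * b) c
  rw [inv b, step1, zero_mul] at k
  exact k
end

section
/- Let D be an alternative division ring and let a, b ∈ D be nonzero elements with a*b ≠ 1. Then b⁻¹ - a ≠ 0, a⁻¹ + (b⁻¹ - a)⁻¹ ≠ 0, and Hua's identity holds: a - (a⁻¹ + (b⁻¹ - a)⁻¹)⁻¹ = (a*b)*a. -/
namespace HuaAux
variable {D : Type*} [AlternativeDivisionRing D]

def A (x y z : D) : D := x * y * z - x * (y * z)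

lemma A_ll (x y : D) : A x x y = 0 := by
  rw [A, AlternativeDivisionRing.alt_left, sub_self]

lemma A_rr (x y : D) : A y x x = 0 := by
  rw [A, AlternativeDivisionRing.alt_right, sub_self]

lemma swap12 (x y z : D) : A y x z = - A x y z := by
  have h : A (x + y) (x + y) z = A x x z + A x y z + A y x z + A y y z := by
    simp only [A, add_mul, mul_add]; abel
  simp only [A_ll] at h
  simp only [zero_add, add_zero] at h
  exact eq_neg_of_add_eq_zero_right h.symm

lemma swap23 (x y z : D) : A x z y = - A x y z := by
  have h : A x (y + z) (y + z) = A x y y + A x y z + A x z y + A x z z := by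
    simp only [A, add_mul, mul_add]; abel
  simp only [A_rr] at h
  simp only [zero_add, add_zero] at h
  exact eq_neg_of_add_eq_zero_right h.symm

lemma cyc (x y z : D) : A x y z = A z x y := by
  have h1 := swap23 x y z
  have h2 := swap12 z x y
  exact (neg_injective (h2.symm.trans h1)).symm

lemma A_flex (x y : D) : A x y x = 0 := by
  rw [swap12 y x x, A_rr, neg_zero]

lemma flex (x y : D) : x * y * x = x * (y * x) :=
  sub_eq_zero.mp (A_flex x y)

lemma teich (w x y z : D) :
    A (w*x) y z - A w (x*y) z + A w x (y*z) = w * A x y z + A w x y * z := by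
  simp only [A, mul_sub, sub_mul]; abel

/-- (i): `A (x*y) x z = x * A x y z - A (x*x) y z` -/
lemma lemI (x y z : D) : A (x*y) x z = x * A x y z - A (x*x) y z := by
  have h := teich x x y z
  rw [A_ll, A_ll, zero_mul, add_zero, add_zero] at h
  -- h : A (x*x) y z - A x (x*y) z = x * A x y z
  have h2 := swap12 (x*y) x z  -- A x (x*y) z = - A (x*y) x z
  linear_combination (norm := abel) h2 + h

/-- (i'): `A (y*x) w x = A w y x * x - A w y (x*x)` -/
lemma lemI' (w y x : D) : A (y*x) w x = A w y x * x - A w y (x*x) := by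
  have h := teich w y x x
  rw [A_rr, A_rr, mul_zero, zero_add, zero_sub] at h
  -- h : -A w (y*x) x + A w y (x*x) = A w y x * x
  have h2 := swap12 w (y*x) x  -- A (y*x) w x = - A w (y*x) x
  linear_combination (norm := abel) h2 + h

lemma left_moufang (x y z : D) : x * y * x * z = x * (y * (x * z)) := by
  have e : x * y * x * z - x * (y * (x * z)) = A (x*y) x z + A x y (x*z) := by
    simp only [A]; abel
  have h1 := lemI x y z
  have h2 : A x y (x*z) = A (x*z) x y := cyc x y (x*z)
  have h3 := lemI x z y  -- A (x*z) x y = x * A x z y - A (x*x) z y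
  have h4 : x * A x z y = - (x * A x y z) := by rw [swap23, mul_neg]
  have h5 : A (x*x) z y = - A (x*x) y z := swap23 (x*x) y z
  have : x * y * x * z - x * (y * (x * z)) = 0 := by
    rw [e]
    linear_combination (norm := abel) h1 + h2 + h3 + h4 - h5
  exact sub_eq_zero.mp this

lemma right_moufang (x y z : D) : z * x * y * x = z * (x * y * x) := by
  have e : z * x * y * x - z * (x * y * x) = A (z*x) y x + A z x (y*x) := by
    simp only [A, flex x y]; abel
  have h2 : A z x (y*x) = A (y*x) z x := cyc z x (y*x)
  have h3 := lemI' z y x  -- A (y*x) z x = A z y x * x - A z y (x*x)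
  have h4 := lemI' y z x  -- A (z*x) y x = A y z x * x - A y z (x*x)
  have h5 : A z y x * x = - (A y z x * x) := by rw [swap12, neg_mul]
  have h6 : A z y (x*x) = - A y z (x*x) := swap12 y z (x*x)
  have : z * x * y * x - z * (x * y * x) = 0 := by
    rw [e]
    linear_combination (norm := abel) h2 + h3 + h4 + h5 - h6
  exact sub_eq_zero.mp this

lemma lemAzx (x y z : D) : A x y (z*x) = x * A x y z := by
  have h0 : A x y (z*x) = A (z*x) x y := cyc x y (z*x)
  have h1 : A (z*x) x y = - A x (z*x) y := swap12 x (z*x) y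
  have ht := teich x z x y
  rw [A_flex, zero_mul, add_zero] at ht
  -- ht : A (x*z) x y - A x (z*x) y + A x z (x*y) = x * A z x y
  have h2 := lemI x z y  -- A (x*z) x y = x * A x z y - A (x*x) z y
  have h3 : A x z (x*y) = A (x*y) x z := cyc x z (x*y)
  have h4 := lemI x y z  -- A (x*y) x z = x * A x y z - A (x*x) y z
  have h5 : x * A x z y = - (x * A x y z) := by rw [swap23, mul_neg]
  have h6 : A (x*x) z y = - A (x*x) y z := swap23 (x*x) y z
  have h7 : x * A z x y = x * A x y z := by rw [cyc z x y, cyc y z x]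
  linear_combination (norm := abel) h0 + h1 + ht - h2 - h3 - h4 - h5 + h6 + h7

lemma mid_moufang (x y z : D) : (x*y) * (z*x) = x * (y * z * x) := by
  have e : (x*y) * (z*x) - x * (y * z * x) = A x y z * x - A (x*y) z x := by
    simp only [A, flex x (y*z), sub_mul]; abel
  have ht := teich x y z x
  rw [A_flex, sub_zero] at ht
  -- ht : A (x*y) z x - -? careful
  have h3 := lemAzx x y z  -- A x y (z*x) = x * A x y z
  have h7 : x * A y z x = x * A x y z := by rw [cyc y z x]
  have : (x*y) * (z*x) - x * (y * z * x) = 0 := by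
    rw [e]
    linear_combination (norm := abel) h3 - h7 - ht
  exact sub_eq_zero.mp this



open AlternativeDivisionRing in
lemma inv_ne_zero' {x : D} (hx : x ≠ 0) : x⁻¹ ≠ 0 := fun h =>
  AlternativeDivisionRing.one_ne_zero (D := D)
    (by rw [← inv_mul_cancel x hx, h, zero_mul])

open AlternativeDivisionRing in
lemma mul_ne_zero' {x y : D} (hx : x ≠ 0) (hy : y ≠ 0) : x * y ≠ 0 := by
  intro h
  have hm := mid_moufang x y y⁻¹
  rw [h, zero_mul, mul_inv_cancel y hy, one_mul] at hm
  -- hm : 0 = x * (x ... )  careful: (x*y)*(y⁻¹*x) = x*(y*y⁻¹*x)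
  have hx2 : x * x = 0 := hm.symm
  have : x = 0 := by
    have h1 : x * x * x⁻¹ = x * (x * x⁻¹) := AlternativeDivisionRing.alt_left x x⁻¹
    rw [hx2, zero_mul, mul_inv_cancel x hx, mul_one] at h1
    exact h1.symm
  exact hx this

open AlternativeDivisionRing in
lemma IP1 {x : D} (hx : x ≠ 0) (y : D) : x⁻¹ * (x * y) = y := by
  have h := left_moufang x x⁻¹ y
  rw [mul_inv_cancel x hx, one_mul] at h
  -- h : x * y = x * (x⁻¹ * (x * y))
  have h2 : x * (x⁻¹ * (x * y) - y) = 0 := by rw [mul_sub, ← h, sub_self]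
  have h3 : x⁻¹ * (x * y) - y = 0 := by
    by_contra hne; exact mul_ne_zero' hx hne h2
  exact sub_eq_zero.mp h3

open AlternativeDivisionRing in
lemma IP1' {x : D} (hx : x ≠ 0) (y : D) : x * (x⁻¹ * y) = y := by
  have h := IP1 hx (x⁻¹ * y)
  -- h : x⁻¹ * (x * (x⁻¹ * y)) = x⁻¹ * y
  have h2 : x⁻¹ * (x * (x⁻¹ * y) - y) = 0 := by rw [mul_sub, h, sub_self]
  have h3 : x * (x⁻¹ * y) - y = 0 := by
    by_contra hne; exact mul_ne_zero' (inv_ne_zero' hx) hne h2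
  exact sub_eq_zero.mp h3

open AlternativeDivisionRing in
lemma IP2 {x : D} (hx : x ≠ 0) (y : D) : y * x * x⁻¹ = y := by
  have h := right_moufang x x⁻¹ y
  rw [mul_inv_cancel x hx, one_mul] at h
  have h2 : (y * x * x⁻¹ - y) * x = 0 := by
    rw [sub_mul, h, sub_self]
  have h3 : y * x * x⁻¹ - y = 0 := by
    by_contra hne; exact mul_ne_zero' hne hx h2
  exact sub_eq_zero.mp h3

open AlternativeDivisionRing in
lemma IP2' {x : D} (hx : x ≠ 0) (y : D) : y * x⁻¹ * x = y := by
  have h := IP2 hx (y * x⁻¹)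
  have h2 : (y * x⁻¹ * x - y) * x⁻¹ = 0 := by rw [sub_mul, h, sub_self]
  have h3 : y * x⁻¹ * x - y = 0 := by
    by_contra hne; exact mul_ne_zero' hne (inv_ne_zero' hx) h2
  exact sub_eq_zero.mp h3

end HuaAux

open HuaAux AlternativeDivisionRing in
theorem stmt3 (D : Type*) [AlternativeDivisionRing D] (a b : D)
    (ha : a ≠ 0) (hb : b ≠ 0) (hab : a * b ≠ 1) :
    b⁻¹ - a ≠ 0 ∧ a⁻¹ + (b⁻¹ - a)⁻¹ ≠ 0 ∧
      a - (a⁻¹ + (b⁻¹ - a)⁻¹)⁻¹ = (a * b) * a := by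
  have hc : b⁻¹ - a ≠ 0 := by
    intro h
    apply hab
    rw [← sub_eq_zero.mp h]
    exact inv_mul_cancel b hb
  have h1ab : (1 : D) - a * b ≠ 0 := by
    intro h; exact hab (sub_eq_zero.mp h).symm
  set x : D := (1 - a * b) * a with hxdef
  have hx : x ≠ 0 := mul_ne_zero' h1ab ha
  have fact1 : x = a - a * b * a := by rw [hxdef, sub_mul, one_mul]
  have fact2 : x = a * (1 - b * a) := by
    rw [fact1, mul_sub, mul_one, flex]
  have fact3 : x = (b⁻¹ - a) * (b * a) := by
    have e2 : (b⁻¹ - a) * (b * a) = b⁻¹ * (b * a) - a * (b * a) := sub_mul _ _ _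
    rw [e2, IP1 hb a, ← flex]
    exact fact1
  have fact4 : x = (a * b) * (b⁻¹ - a) := by
    rw [mul_sub, IP2 hb a, fact1]
  have E2 : (a⁻¹ + (b⁻¹ - a)⁻¹) * x = 1 := by
    rw [add_mul]
    have t1 : a⁻¹ * x = 1 - b * a := by rw [fact2, IP1 ha]
    have t2 : (b⁻¹ - a)⁻¹ * x = b * a := by rw [fact3, IP1 hc]
    rw [t1, t2, sub_add_cancel]
  have E1 : x * (a⁻¹ + (b⁻¹ - a)⁻¹) = 1 := by
    rw [mul_add]
    have t1 : x * a⁻¹ = 1 - a * b := by rw [hxdef, IP2 ha]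
    have t2 : x * (b⁻¹ - a)⁻¹ = a * b := by rw [fact4, IP2 hc]
    rw [t1, t2, sub_add_cancel]
  have hs : a⁻¹ + (b⁻¹ - a)⁻¹ ≠ 0 := by
    intro h
    rw [h, zero_mul] at E2
    exact AlternativeDivisionRing.one_ne_zero (D := D) E2.symm
  have hsinv : (a⁻¹ + (b⁻¹ - a)⁻¹)⁻¹ = x := by
    have h := IP1 hs x
    rwa [E2, mul_one] at h
  refine ⟨hc, hs, ?_⟩
  rw [hsinv, fact1, sub_sub_cancel]
end

section
/- Let D be an alternative division ring and let a ∈ D with a ≠ 0 and a ≠ 1. Then a⁻¹ + (1 - a)⁻¹ ≠ 0 and a*a = a - (a⁻¹ + (1 - a)⁻¹)⁻¹. -/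
namespace AltProof
open AlternativeDivisionRing
variable {D : Type*} [AlternativeDivisionRing D]

def assoc (x y z : D) : D := x * y * z - x * (y * z)

lemma linL (a b c : D) : a*b*c + b*a*c = a*(b*c) + b*(a*c) := by
  have h := alt_left (a+b) c
  have ha := alt_left a c
  have hb := alt_left b c
  simp only [add_mul, mul_add] at h
  linear_combination (norm := abel) h - ha - hb

lemma linR (a b c : D) : a*(b*c) + a*(c*b) = a*b*c + a*c*b := by
  have h := alt_right (b+c) a
  have hb := alt_right b a
  have hc := alt_right c a
  simp only [add_mul, mul_add] at h
  linear_combination (norm := abel) hb + hc - h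

lemma skew12 (a b c : D) : assoc a b c = - assoc b a c := by
  have h := linL a b c
  simp only [assoc]
  linear_combination (norm := abel) h



lemma U1 (x y z : D) : assoc x (y*x) z = x * assoc x y z := by
  simp only [assoc, mul_sub]
  linear_combination (norm := (simp only [mul_add, add_mul, mul_sub, sub_mul, mul_neg, neg_mul]; abel)) -(linR x (y*z) x) - (linR x z (x*y)) - (linL z x (x*y)) - (linR x z (y*x)) - (linL z x (y*x)) - (linL (y*z) x x) - (linR z x (y*x)) - (linL z y (x*x)) - (linL z y (x*x)) - (linR y z (x*x)) - (linL y (x*x) z) - (linR z y (x*x)) + (z * (linL y x x)) + (y * (alt_left x z)) + (y * (linL z x x)) + (y * (linR x z x)) + (z * (linR x y x)) + (z * (alt_left x y)) + (z * (alt_left x y)) - (alt_left x (y*z)) - (alt_left x (y*z)) + ((alt_left x y) * z) + ((linL z y x) * x) + ((alt_left x z) * y) + ((linR x z x) * y) + ((linL z x x) * y) - (linL x (z*x) y) - (linR x y (z*x)) - (linL y x (z*x)) - (linR y x (z*x)) - (alt_right x (z*y))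

lemma U2 (x y z : D) : assoc x y (x*z) = assoc x y z * x := by
  simp only [assoc, sub_mul]
  linear_combination (norm := (simp only [mul_add, add_mul, mul_sub, sub_mul, mul_neg, neg_mul]; abel)) (linL y x (x*z)) + (linL y x (x*z)) - (y * (linL z x x)) - (y * (linL z x x)) + (linR y x (z*x)) + (linR y x (z*x)) + (linL z y (x*x)) + (linL z y (x*x)) + (linL z y (x*x)) + (linL z y (x*x)) - (z * (linL y x x)) - (z * (linL y x x)) + (linR z x (y*x)) + (linR z x (y*x)) - (z * (linR x y x)) - (z * (linR x y x)) - (linR z x (x*y)) + (linR z y (x*x)) + (linR z y (x*x)) + (x * (linL z y x)) + (linL y x (z*x)) + (linL y x (z*x)) + (linL z x (y*x)) + (linL z x (y*x)) + (linL (y*z) x x) + (linL (y*z) x x) - (linL z (x*y) x) + (x * (linR z y x)) + (linL z x (x*y)) + (linR x y (z*x)) + (linR x y (z*x)) + (linR x y (z*x)) + (linL x (x*z) y) + (linR x y (x*z)) - ((linL z x x) * y) - ((linL z x x) * y) - (y * (alt_left x z)) - (y * (alt_left x z)) - (y * (alt_left x z)) - (y * (alt_left x z)) - (y * (linR x z x))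 - (y * (linR x z x)) - (z * (alt_left x y)) - (z * (alt_left x y)) - (z * (alt_left x y)) - (z * (alt_left x y)) + (alt_left x (y*z)) + (linR x (y*z) x) + (linL x (y*x) z) + (linL x (y*x) z) + (linR x z (y*x)) + (linR x z (y*x)) + (linR y z (x*x)) + (linR y z (x*x)) - ((alt_left x y) * z) - ((alt_left x y) * z) - ((linR x y x) * z) - ((linR x y x) * z) - ((linL y x x) * z) - ((linL y x x) * z) - ((linL z y x) * x) - ((linL z y x) * x) + (linL x (z*x) y) + (linL x (z*x) y) + (alt_right x (z*y)) + (alt_right x (z*y)) - ((alt_left x z) * y) - ((linR x z x) * y)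

lemma MM (x y z : D) : (x*y)*(z*x) = x*((y*z)*x) := by
  linear_combination (norm := (simp only [mul_add, add_mul, mul_sub, sub_mul, mul_neg, neg_mul]; abel)) -(linL (y*z) x x) + (z * (linR x y x)) + (z * (linL y x x)) - (linR z y (x*x)) - (x * (linL z y x)) - (linL y x (z*x)) - (linL z x (y*x)) - (linR y x (z*x)) - (linR z x (y*x)) + (y * (linL z x x)) - (linL z y (x*x)) - (linL z y (x*x)) - (x * (linR z y x)) - (linL z x (x*y)) - (linR x y (z*x)) - (linR x y (z*x)) - (linL x (x*z) y) - (linR x y (x*z)) - (linL y x (x*z)) + ((linL z x x) * y) + (y * (alt_left x z)) + (y * (alt_left x z)) + (y * (linR x z x)) + (z * (alt_left x y)) + (z * (alt_left x y)) - (alt_left x (y*z)) - (linR x (y*z) x) - (linL x (y*x) z) - (linR x z (y*x)) - (linR y z (x*x)) + ((alt_left x y) * z) + ((linR x y x) * z) + ((linL y x x) * z) + ((linL z y x) * x) - (linL x (z*x) y) - (alt_right x (z*y))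


lemma skew23 (a b c : D) : assoc a b c = - assoc a c b := by
  have h := linR a b c
  simp only [assoc]
  linear_combination (norm := abel) -h

lemma assoc_right_self (a b : D) : assoc a b b = 0 := by
  simp only [assoc, alt_right, sub_self]

lemma flex (a b : D) : assoc a b a = 0 := by
  rw [skew12, assoc_right_self, neg_zero]

lemma assoc_one_left (a b : D) : assoc 1 a b = 0 := by
  simp [assoc]

lemma assoc_one_mid (a b : D) : assoc a 1 b = 0 := by
  simp [assoc]

lemma Tid (a b c d : D) :
    assoc (a*b) c d - assoc a (b*c) d + assoc a b (c*d)
      = a * assoc b c d + assoc a b c * d := by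
  simp only [assoc, mul_sub, sub_mul]
  abel

section Inv
variable {u : D} (hu : u ≠ 0)
include hu

lemma g_zero (z : D) : assoc u u⁻¹ z = 0 := by
  have h1 : u * u⁻¹ = 1 := AlternativeDivisionRing.mul_inv_cancel u hu
  have h2 : u⁻¹ * u = 1 := AlternativeDivisionRing.inv_mul_cancel u hu
  -- P1 : u * assoc u u⁻¹ z = 0
  have P1 : ∀ w : D, u * assoc u u⁻¹ w = 0 := by
    intro w
    have := U1 u u⁻¹ w
    rw [h2, assoc_one_mid] at this
    exact this.symm
  -- assoc u u⁻¹ (u*z) = 0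
  have hUz : assoc u u⁻¹ (u*z) = 0 := by
    have t := Tid u u⁻¹ u z
    rw [h1, h2, assoc_one_left, assoc_one_mid, flex, zero_mul, add_zero,
      show assoc u⁻¹ u z = - assoc u u⁻¹ z from skew12 _ _ _] at t
    rw [mul_neg, P1 z, neg_zero] at t
    simpa using t
  -- P3 : assoc u u⁻¹ z * u = 0
  have P3 : assoc u u⁻¹ z * u = 0 := by
    have := U2 u u⁻¹ z
    rw [hUz] at this
    exact this.symm
  -- no zero divisors
  by_contra hg
  -- (assoc u u⁻¹ z) * u = 0 with both factors nonzero: derive contradiction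
  set a := assoc u u⁻¹ z with hadef
  have hsq : a * a = 0 := by
    have hmm := MM a u u⁻¹
    rw [P3, zero_mul, h1, one_mul] at hmm
    exact hmm.symm
  have ha1 : a * a⁻¹ = 1 := AlternativeDivisionRing.mul_inv_cancel a hg
  have : (a * a) * a⁻¹ = a * (a * a⁻¹) := AlternativeDivisionRing.alt_left a a⁻¹
  rw [hsq, zero_mul, ha1, mul_one] at this
  exact hg this.symm

lemma mul_inv_cancel_left' (z : D) : u * (u⁻¹ * z) = z := by
  have h := g_zero hu z
  have h1 : u * u⁻¹ = 1 := AlternativeDivisionRing.mul_inv_cancel u hu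
  simp only [assoc, h1, one_mul, sub_eq_zero] at h
  exact h.symm

lemma inv_mul_cancel_left' (z : D) : u⁻¹ * (u * z) = z := by
  have h : assoc u⁻¹ u z = 0 := by rw [skew12, g_zero hu, neg_zero]
  have h2 : u⁻¹ * u = 1 := AlternativeDivisionRing.inv_mul_cancel u hu
  simp only [assoc, h2, one_mul, sub_eq_zero] at h
  exact h.symm

lemma mul_inv_cancel_right' (z : D) : (z * u) * u⁻¹ = z := by
  have h : assoc z u u⁻¹ = 0 := by
    rw [skew12, skew23, g_zero hu, neg_neg]
  have h1 : u * u⁻¹ = 1 := AlternativeDivisionRing.mul_inv_cancel u hu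
  simp only [assoc, h1, mul_one, sub_eq_zero] at h
  exact h

lemma inv_mul_cancel_right' (z : D) : (z * u⁻¹) * u = z := by
  have h : assoc z u⁻¹ u = 0 := by
    rw [skew23, skew12, skew23, g_zero hu]; simp
  have h2 : u⁻¹ * u = 1 := AlternativeDivisionRing.inv_mul_cancel u hu
  simp only [assoc, h2, mul_one, sub_eq_zero] at h
  exact h

end Inv

lemma mul_ne_zero'' {x y : D} (hx : x ≠ 0) (hy : y ≠ 0) : x * y ≠ 0 := by
  intro h
  have hmm := MM x y y⁻¹
  rw [h, zero_mul, AlternativeDivisionRing.mul_inv_cancel y hy, one_mul] at hmm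
  have halt := AlternativeDivisionRing.alt_left x x⁻¹
  rw [← hmm, zero_mul, AlternativeDivisionRing.mul_inv_cancel x hx, mul_one] at halt
  exact hx halt.symm

end AltProof

theorem stmt4 (D : Type*) [AlternativeDivisionRing D] (a : D)
    (ha : a ≠ 0) (ha1 : a ≠ 1) :
    a⁻¹ + (1 - a)⁻¹ ≠ 0 ∧ a * a = a - (a⁻¹ + (1 - a)⁻¹)⁻¹ := by
  have h1a : (1 : D) - a ≠ 0 := sub_ne_zero.mpr (Ne.symm ha1)
  set b : D := a⁻¹ + (1 - a)⁻¹ with hb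
  set c : D := a * (1 - a) with hc
  have hc2 : c = (1 - a) * a := by rw [hc]; rw [mul_sub, sub_mul, mul_one, one_mul]
  have hcb : c * b = 1 := by
    rw [hb, mul_add]
    have e1 : c * a⁻¹ = 1 - a := by
      rw [hc2]
      exact AltProof.mul_inv_cancel_right' ha (1 - a)
    have e2 : c * (1 - a)⁻¹ = a := by
      rw [hc]
      exact AltProof.mul_inv_cancel_right' h1a a
    rw [e1, e2, sub_add_cancel]
  have hbc : b * c = 1 := by
    rw [hb, add_mul]
    have e1 : a⁻¹ * c = 1 - a := by
      rw [hc]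
      exact AltProof.inv_mul_cancel_left' ha (1 - a)
    have e2 : (1 - a)⁻¹ * c = a := by
      rw [hc2]
      exact AltProof.inv_mul_cancel_left' h1a a
    rw [e1, e2, sub_add_cancel]
  have hbne : b ≠ 0 := by
    intro h0
    rw [h0, mul_zero] at hcb
    exact AlternativeDivisionRing.one_ne_zero hcb.symm
  refine ⟨hbne, ?_⟩
  have hbinv : b⁻¹ = c := by
    have := AltProof.inv_mul_cancel_left' hbne c
    rw [hbc] at this
    rw [← this, mul_one]
  rw [hbinv, hc, mul_sub, mul_one]
  abel
end

section
/- Let D be a noncommutative alternative division ring in which 2 ≠ 0 (i.e., (1+1 : D) ≠ 0), and suppose f, g : D → D are additive maps satisfying f(x) + (x*x)*g(x⁻¹) = 0 for all nonzero x ∈ D. Then there exists a fixed element q ∈ D such that f(x) = x*q and g(x) = -(x*q) for all x ∈ D. -/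
/-!
Put `δ x = f x - x * f 1`. Evaluating the hypothesis at `x`, `x + 1` and `x * (x + 1)`, which are
tied together by Hua's identity `(x + 1)⁻¹ = x⁻¹ - (x * (x + 1))⁻¹`, shows that `δ` is a Jordan
left derivation: `δ (x * x) = 2 • (x * δ x)`. Applying `δ` to the Jordan identity
`x² ∘ (y ∘ x) = (x² ∘ y) ∘ x` gives `⁅x, ⁅x, y⁆⁆ * δ x = 0`, and after polarisation a nonzero
`⁅y, ⁅y, x⁆⁆` forces `δ x = 0`. A noncommutative alternative division ring of characteristic `≠ 2`
has some `⁅y, ⁅y, x₀⁆⁆ ≠ 0`, and for every `x` one of `⁅y, ⁅y, x⁆⁆`, `⁅y, ⁅y, x + x₀⁆⁆` is nonzero,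
so the additive map `δ` vanishes. Hence `f x = x * f 1`, and the hypothesis at `x⁻¹` together with
the inverse property `x⁻¹ * (x * t) = t` gives `g x = -(x * f 1)`.
-/

class IsAlternative (R : Type*) [Mul R] : Prop where
  mul_self_mul : ∀ x y : R, x * x * y = x * (x * y)
  mul_mul_self : ∀ x y : R, y * x * x = y * (x * x)

instance AlternativeDivisionRing.isAlternative (D : Type*) [AlternativeDivisionRing D] :
    IsAlternative D :=
  ⟨AlternativeDivisionRing.alt_left, AlternativeDivisionRing.alt_right⟩

open IsAlternative

section NonUnitalNonAssocRing

variable {R : Type*} [NonUnitalNonAssocRing R]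

theorem associator_add_left (a a' b c : R) :
    associator (a + a') b c = associator a b c + associator a' b c := by
  simp only [associator, add_mul]; abel

theorem associator_add_mid (a b b' c : R) :
    associator a (b + b') c = associator a b c + associator a b' c := by
  simp only [associator, add_mul, mul_add]; abel

theorem associator_add_right (a b c c' : R) :
    associator a b (c + c') = associator a b c + associator a b c' := by
  simp only [associator, mul_add]; abel

theorem associator_sub_mid (a b b' c : R) :
    associator a (b - b') c = associator a b c - associator a b' c := by
  simp only [associator, sub_mul, mul_sub]; abel

theorem Ring.lie_add (a b c : R) : ⁅a, b + c⁆ = ⁅a, b⁆ + ⁅a, c⁆ := by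
  simp only [Ring.lie_def, mul_add, add_mul]; abel

def IsJordanLeftDerivation (δ : R →+ R) : Prop :=
  ∀ x, δ (x * x) = 2 • (x * δ x)

theorem IsJordanLeftDerivation.map_mul_add_mul {δ : R →+ R} (hδ : IsJordanLeftDerivation δ)
    (a b : R) :
    δ (a * b + b * a) = 2 • (a * δ b + b * δ a) := by
  have h := hδ (a + b)
  simp only [add_mul, mul_add, map_add, hδ a, hδ b, smul_add] at h
  rw [map_add, smul_add]
  linear_combination (norm := abel) h

end NonUnitalNonAssocRing

section Alternative

variable {R : Type*} [NonUnitalNonAssocRing R] [IsAlternative R]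

theorem associator_self_left (a c : R) : associator a a c = 0 := by
  rw [associator, mul_self_mul, sub_self]

theorem associator_self_right (a c : R) : associator a c c = 0 := by
  rw [associator, mul_mul_self, sub_self]

theorem associator_swap_left (a b c : R) : associator b a c = -associator a b c := by
  have h := associator_self_left (a + b) c
  rw [associator_add_left, associator_add_mid, associator_add_mid, associator_self_left,
    associator_self_left, zero_add, add_zero] at h
  exact eq_neg_of_add_eq_zero_right h

theorem associator_swap_right (a b c : R) : associator a c b = -associator a b c := by
  have h := associator_self_right a (b + c)
  rw [associator_add_mid, associator_add_right, associator_add_right, associator_self_right,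
    associator_self_right, zero_add, add_zero] at h
  exact eq_neg_of_add_eq_zero_right h

theorem associator_rotate (a b c : R) : associator a b c = associator b c a := by
  rw [associator_swap_right b a c, associator_swap_left a b c, neg_neg]

theorem associator_swap_outer (a b c : R) : associator c b a = -associator a b c := by
  rw [associator_rotate c b a, associator_swap_left]

theorem associator_self_outer (a b : R) : associator a b a = 0 := by
  rw [associator_swap_right, associator_self_left, neg_zero]

theorem mul_mul_self_left (a b : R) : a * b * a = a * (b * a) :=
  sub_eq_zero.mp (associator_self_outer a b)

theorem associator_self_mul_left (x y : R) : associator x (x * y) y = 0 := by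
  have h := associator_cocycle x x y y
  rwa [associator_self_left, associator_self_left, associator_self_right,
    associator_self_right, mul_zero, zero_mul, sub_zero, zero_sub, add_zero, neg_add_eq_zero,
    eq_comm] at h

theorem mul_mul_mul_self_left (x y z : R) : x * y * x * z = x * (y * (x * z)) := by
  have hlin : associator x (x * y) z + associator x (x * z) y = 0 := by
    have h := associator_self_mul_left x (y + z)
    rwa [mul_add, associator_add_mid, associator_add_right, associator_add_right,
      associator_self_mul_left, associator_self_mul_left, zero_add, add_zero] at h
  have h : x * y * x * z - x * (y * (x * z)) =
      associator (x * y) x z + associator x y (x * z) := by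
    simp only [associator]; abel
  rw [associator_rotate (x * y), associator_swap_right x (x * y) z,
    associator_swap_right x (x * z) y, ← neg_add, hlin, neg_zero] at h
  exact sub_eq_zero.mp h

theorem mul_add_mul_mul (a b t : R) : (a * b + b * a) * t = a * (b * t) + b * (a * t) := by
  have h : associator a b t + associator b a t = 0 := by
    rw [associator_swap_left a b t, add_neg_cancel]
  simp only [associator] at h
  rw [add_mul]
  linear_combination (norm := abel) h

theorem associator_mul_self_left_self (x y : R) : associator (x * x) y x = 0 := by
  have h := associator_cocycle x x y x
  rwa [associator_self_outer, associator_self_outer, associator_self_left, associator_self_left,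
    mul_zero, zero_mul, add_zero, sub_zero, zero_sub, add_zero, neg_eq_zero] at h

theorem jordan_identity (x y : R) :
    x * x * (y * x + x * y) + (y * x + x * y) * (x * x) =
      (x * x * y + y * (x * x)) * x + x * (x * x * y + y * (x * x)) := by
  have h₁ : x * x * (y * x) = x * x * y * x :=
    (sub_eq_zero.mp (associator_mul_self_left_self x y)).symm
  have h₂ : x * y * (x * x) = x * (y * (x * x)) := by
    rw [← sub_eq_zero, ← associator, associator_swap_outer, associator_mul_self_left_self,
      neg_zero]
  have h₃ : y * x * (x * x) = y * (x * x) * x := by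
    rw [← mul_mul_self x (y * x), mul_mul_self x y]
  have h₄ : x * x * (x * y) = x * (x * x * y) := by simp only [mul_self_mul]
  rw [mul_add, add_mul, add_mul, mul_add, h₁, h₂, h₃, h₄]
  abel

theorem lie_mul (a x y : R) :
    ⁅a, x * y⁆ = ⁅a, x⁆ * y + x * ⁅a, y⁆ - 3 • associator a x y := by
  calc ⁅a, x * y⁆ = ⁅a, x⁆ * y + x * ⁅a, y⁆
        - (associator a x y - associator x a y + associator x y a) := by
        simp only [Ring.lie_def, associator, mul_sub, sub_mul]; abel
    _ = _ := by
        rw [associator_swap_left a x y, ← associator_rotate a x y]; abel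

theorem lie_lie_self_mul (x y t : R) :
    ⁅x, ⁅x, y⁆⁆ * t = x * x * (y * t) + y * (x * (x * t)) - 2 • (x * (y * (x * t))) := by
  have h : ⁅x, ⁅x, y⁆⁆ = x * x * y + y * (x * x) - 2 • (x * y * x) := by
    simp only [Ring.lie_def, mul_sub, sub_mul, mul_self_mul, mul_mul_self, mul_mul_self_left]
    abel
  rw [h, sub_mul, smul_mul_assoc, mul_add_mul_mul, mul_self_mul x t, mul_mul_mul_self_left]

theorem IsJordanLeftDerivation.two_nsmul_lie_lie_mul_eq_zero {δ : R →+ R}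
    (hδ : IsJordanLeftDerivation δ) (x y : R) : 2 • (⁅x, ⁅x, y⁆⁆ * δ x) = 0 := by
  have h := congrArg δ (jordan_identity x y)
  rw [hδ.map_mul_add_mul, hδ.map_mul_add_mul, hδ.map_mul_add_mul, hδ.map_mul_add_mul,
    hδ x] at h
  simp only [mul_add, smul_add, mul_smul_comm, mul_add_mul_mul] at h
  rw [lie_lie_self_mul]
  simp only [mul_self_mul] at h ⊢
  linear_combination (norm := abel) h

-- `u = ⁅a, b⁆` commutes with `a`, so `⁅a, u * b⁆ = u * u`; expanding
-- `⁅a, ⁅a, (u * b) * (u * b)⁆⁆ = 0` then leaves `2 • (u * u) * (u * u)`.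
theorem two_nsmul_lie_mul_self_mul_self_eq_zero (h : ∀ x y : R, ⁅x, ⁅x, y⁆⁆ = 0) (a b : R) :
    2 • (⁅a, b⁆ * ⁅a, b⁆ * (⁅a, b⁆ * ⁅a, b⁆)) = 0 := by
  set u := ⁅a, b⁆ with hu
  set p := u * u
  set w := u * b
  have hau : ⁅a, u⁆ = 0 := h a b
  have haub : associator a u b = 0 := by
    rw [hu, Ring.lie_def, associator_sub_mid, associator_self_mul_left, associator_swap_outer,
      associator_self_mul_left, neg_zero, sub_zero]
  have haw : ⁅a, w⁆ = p := by
    rw [lie_mul, hau, haub, zero_mul, smul_zero, sub_zero, zero_add]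
  have hap : ⁅a, p⁆ = 0 := by
    rw [lie_mul, hau, associator_self_right, zero_mul, mul_zero, smul_zero, sub_zero, add_zero]
  have haww : ⁅a, w * w⁆ = p * w + w * p := by
    rw [lie_mul, haw, associator_self_right, smul_zero, sub_zero]
  have h0 := h a (w * w)
  rw [haww, Ring.lie_add, lie_mul a p w, lie_mul a w p, hap, haw, associator_swap_right a p w,
    zero_mul, mul_zero] at h0
  linear_combination (norm := abel) h0

end Alternative

section UnitalAlternative

variable {R : Type*} [NonAssocRing R]

theorem associator_one_left (b c : R) : associator 1 b c = 0 := by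
  rw [associator, one_mul, one_mul, sub_self]

theorem associator_one_mid (a c : R) : associator a 1 c = 0 := by
  rw [associator, one_mul, mul_one, sub_self]

variable [IsAlternative R]

theorem mul_add_one_mul (x t : R) : x * (x + 1) * t = x * ((x + 1) * t) := by
  simp only [mul_add, add_mul, mul_one, one_mul, mul_self_mul]

theorem mul_self_mul_comm_add_one_mul_self (x t : R) :
    x * x * ((x + 1) * (x + 1) * t) = (x + 1) * (x + 1) * (x * x * t) := by
  simp only [mul_self_mul, mul_add, add_mul, one_mul, mul_one]

theorem mul_self_mul_add_one_mul_self (x t : R) :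
    x * x * ((x + 1) * (x + 1) * t) = x * (x + 1) * (x * (x + 1)) * t := by
  rw [mul_self_mul (x * (x + 1)), mul_add_one_mul, mul_add_one_mul]
  simp only [mul_self_mul, mul_add, add_mul, one_mul, mul_one]

theorem IsJordanLeftDerivation.sub_mulRight {F : R →+ R}
    (hF : ∀ x, F (x * x) + x * x * F 1 = 2 • (x * F x)) :
    IsJordanLeftDerivation (F - AddMonoidHom.mulRight (F 1)) := by
  intro x
  simp only [AddMonoidHom.sub_apply, AddMonoidHom.coe_mulRight, mul_sub, smul_sub]
  rw [← mul_self_mul, ← hF]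
  abel

end UnitalAlternative

namespace AlternativeDivisionRing

variable {D : Type*} [AlternativeDivisionRing D]

theorem associator_mul_eq_zero_of_mul_eq_one {a b : D} (hab : a * b = 1) (z : D) :
    associator a b (a * z) = 0 := by
  rw [associator, hab, one_mul, ← mul_mul_mul_self_left, hab, one_mul, sub_self]

theorem mul_associator_eq_zero_of_mul_eq_one {a b : D} (hab : a * b = 1) (hba : b * a = 1)
    (z : D) : a * associator a b z = 0 := by
  have h := associator_cocycle a b a z
  rwa [hab, hba, associator_mul_eq_zero_of_mul_eq_one hab, associator_self_outer,
    associator_one_left, associator_one_mid, associator_swap_left, mul_neg, zero_mul, sub_zero,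
    add_zero, sub_zero, add_zero, neg_eq_zero] at h

theorem eq_zero_of_two_nsmul_eq_zero (h2 : (1 + 1 : D) ≠ 0) {t : D} (ht : 2 • t = 0) :
    t = 0 := by
  by_contra hne
  apply h2
  rw [← mul_inv_cancel t hne, ← add_mul, ← two_nsmul, ht, zero_mul]

theorem associator_eq_zero_of_mul_eq_one (h2 : (1 + 1 : D) ≠ 0) {a b : D} (hab : a * b = 1)
    (hba : b * a = 1) (z : D) : associator a b z = 0 := by
  set k := associator a b z
  have hak : a * k = 0 := mul_associator_eq_zero_of_mul_eq_one hab hba z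
  have hbk : b * k = 0 := by
    have h := mul_associator_eq_zero_of_mul_eq_one hba hab z
    rwa [associator_swap_left, mul_neg, neg_eq_zero] at h
  have hk : -k = k := by
    calc -k = -associator a b k := by rw [associator, hab, one_mul, hbk, mul_zero, sub_zero]
      _ = associator b a k := (associator_swap_left a b k).symm
      _ = k := by rw [associator, hba, one_mul, hak, mul_zero, sub_zero]
  apply eq_zero_of_two_nsmul_eq_zero h2
  rw [two_nsmul]
  nth_rw 1 [← hk]
  exact neg_add_cancel k

theorem inv_mul_cancel_left₀ (h2 : (1 + 1 : D) ≠ 0) {x : D} (hx : x ≠ 0) (t : D) :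
    x⁻¹ * (x * t) = t := by
  have h := associator_eq_zero_of_mul_eq_one h2 (inv_mul_cancel x hx) (mul_inv_cancel x hx) t
  rw [associator, inv_mul_cancel x hx, one_mul, sub_eq_zero] at h
  exact h.symm

theorem eq_zero_of_ne_zero_of_mul_left_eq_zero (h2 : (1 + 1 : D) ≠ 0) {a b : D} (ha : a ≠ 0)
    (h : a * b = 0) : b = 0 := by
  rw [← inv_mul_cancel_left₀ h2 ha b, h, mul_zero]

theorem mul_ne_zero (h2 : (1 + 1 : D) ≠ 0) {a b : D} (ha : a ≠ 0) (hb : b ≠ 0) : a * b ≠ 0 :=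
  fun h => hb (eq_zero_of_ne_zero_of_mul_left_eq_zero h2 ha h)

theorem inv_eq_of_mul_eq_one_right (h2 : (1 + 1 : D) ≠ 0) {a b : D} (h : a * b = 1) :
    a⁻¹ = b := by
  have ha : a ≠ 0 := by
    rintro rfl
    exact one_ne_zero (h.symm.trans (zero_mul b))
  rw [← inv_mul_cancel_left₀ h2 ha b, h, mul_one]

theorem inv_ne_zero {x : D} (hx : x ≠ 0) : x⁻¹ ≠ 0 := by
  intro h
  refine one_ne_zero (D := D) ?_
  rw [← inv_mul_cancel x hx, h, zero_mul]

theorem inv_inv (h2 : (1 + 1 : D) ≠ 0) {x : D} (hx : x ≠ 0) : x⁻¹⁻¹ = x :=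
  inv_eq_of_mul_eq_one_right h2 (inv_mul_cancel x hx)

theorem inv_add_one (h2 : (1 + 1 : D) ≠ 0) {x : D} (hx : x ≠ 0) (hx1 : x + 1 ≠ 0) :
    (x + 1)⁻¹ = x⁻¹ - (x * (x + 1))⁻¹ := by
  apply inv_eq_of_mul_eq_one_right h2
  have h : (x + 1) * (x * (x + 1))⁻¹ = x⁻¹ := by
    rw [← inv_mul_cancel_left₀ h2 hx ((x + 1) * _), ← mul_add_one_mul,
      mul_inv_cancel _ (mul_ne_zero h2 hx hx1), mul_one]
  rw [mul_sub, h, add_mul, one_mul, mul_inv_cancel x hx, add_sub_cancel_right]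

theorem map_mul_self_add_mul_map_one (h2 : (1 + 1 : D) ≠ 0) (F G : D →+ D)
    (hFG : ∀ x, x ≠ 0 → F x + x * x * G x⁻¹ = 0) (x : D) :
    F (x * x) + x * x * F 1 = 2 • (x * F x) := by
  rcases eq_or_ne x 0 with rfl | hx
  · simp
  rcases eq_or_ne (x + 1) 0 with hx1 | hx1
  · rw [eq_neg_of_add_eq_zero_left hx1, neg_mul_neg, one_mul, one_mul, map_neg, neg_one_mul,
      neg_neg, two_nsmul]
  have hGx : x * x * G x⁻¹ = -F x := eq_neg_of_add_eq_zero_right (hFG x hx)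
  have hGs : x * (x + 1) * (x * (x + 1)) * G (x * (x + 1))⁻¹ = -(F (x * x) + F x) := by
    rw [eq_neg_of_add_eq_zero_right (hFG _ (mul_ne_zero h2 hx hx1)), mul_add_one, map_add]
  have h := congrArg (x * x * ·) (eq_neg_of_add_eq_zero_right (hFG _ hx1))
  rw [inv_add_one h2 hx hx1, map_sub, mul_sub, mul_sub, mul_self_mul_comm_add_one_mul_self,
    mul_self_mul_add_one_mul_self, hGx, hGs, map_add] at h
  simp only [mul_neg, mul_add, add_mul, one_mul, mul_one, mul_self_mul] at h ⊢
  linear_combination (norm := abel) h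

theorem map_eq_neg_mul (h2 : (1 + 1 : D) ≠ 0) (G : D →+ D) {f : D → D} {q : D}
    (hf : ∀ x, f x = x * q) (hfG : ∀ x, x ≠ 0 → f x + x * x * G x⁻¹ = 0) (y : D) :
    G y = -(y * q) := by
  rcases eq_or_ne y 0 with rfl | hy
  · simp
  set x := y⁻¹
  have hx : x ≠ 0 := inv_ne_zero hy
  have hyx : y = x⁻¹ := (inv_inv h2 hy).symm
  have h := eq_neg_of_add_eq_zero_right (hfG x hx)
  rw [hf, mul_self_mul] at h
  calc G y = x⁻¹ * (x⁻¹ * (x * (x * G x⁻¹))) := by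
        rw [inv_mul_cancel_left₀ h2 hx, inv_mul_cancel_left₀ h2 hx, ← hyx]
    _ = -(y * q) := by rw [h, mul_neg, mul_neg, inv_mul_cancel_left₀ h2 hx, ← hyx]

theorem exists_lie_lie_ne_zero (h2 : (1 + 1 : D) ≠ 0) (hnc : ∃ a b : D, a * b ≠ b * a) :
    ∃ x y : D, ⁅x, ⁅x, y⁆⁆ ≠ 0 := by
  obtain ⟨a, b, hab⟩ := hnc
  by_contra! h
  have hu : ⁅a, b⁆ ≠ 0 := sub_ne_zero.mpr hab
  have hp := mul_ne_zero h2 hu hu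
  exact mul_ne_zero h2 hp hp
    (eq_zero_of_two_nsmul_eq_zero h2 (two_nsmul_lie_mul_self_mul_self_eq_zero h a b))

theorem _root_.IsJordanLeftDerivation.apply_eq_zero (h2 : (1 + 1 : D) ≠ 0)
    (hnc : ∃ a b : D, a * b ≠ b * a) {δ : D →+ D} (hδ : IsJordanLeftDerivation δ) (x : D) :
    δ x = 0 := by
  have hE (x y : D) : ⁅x, ⁅x, y⁆⁆ * δ x = 0 :=
    eq_zero_of_two_nsmul_eq_zero h2 (hδ.two_nsmul_lie_lie_mul_eq_zero x y)
  have key (y x : D) (hyx : ⁅y, ⁅y, x⁆⁆ ≠ 0) : δ x = 0 := by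
    have hy : δ y = 0 := eq_zero_of_ne_zero_of_mul_left_eq_zero h2 hyx (hE y x)
    have hpol : ⁅y + x, ⁅y + x, x⁆⁆ = ⁅y, ⁅y, x⁆⁆ - ⁅x, ⁅x, y⁆⁆ := by
      simp only [Ring.lie_def, mul_add, add_mul, mul_sub, sub_mul]; abel
    have h := hE (y + x) x
    rw [hpol, map_add, hy, zero_add, sub_mul, hE x y, sub_zero] at h
    exact eq_zero_of_ne_zero_of_mul_left_eq_zero h2 hyx h
  obtain ⟨y, x₀, hyx₀⟩ := exists_lie_lie_ne_zero h2 hnc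
  by_cases hx : ⁅y, ⁅y, x⁆⁆ = 0
  · have h := key y (x + x₀) (by rwa [Ring.lie_add, Ring.lie_add, hx, zero_add])
    rwa [map_add, key y x₀ hyx₀, add_zero] at h
  · exact key y x hx

end AlternativeDivisionRing

open AlternativeDivisionRing in
theorem stmt5 (D : Type*) [AlternativeDivisionRing D]
    (hnc : ∃ a b : D, a * b ≠ b * a)
    (h2 : (1 + 1 : D) ≠ 0)
    (f g : D → D)
    (hf : ∀ x y : D, f (x + y) = f x + f y)
    (hg : ∀ x y : D, g (x + y) = g x + g y)
    (hid : ∀ x : D, x ≠ 0 → f x + (x * x) * g x⁻¹ = 0) :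
    ∃ q : D, (∀ x : D, f x = x * q) ∧ (∀ x : D, g x = -(x * q)) := by
  let F : D →+ D := AddMonoidHom.mk' f hf
  let G : D →+ D := AddMonoidHom.mk' g hg
  have hδ : IsJordanLeftDerivation (F - AddMonoidHom.mulRight (F 1)) :=
    IsJordanLeftDerivation.sub_mulRight (map_mul_self_add_mul_map_one h2 F G hid)
  have hfq (x : D) : f x = x * f 1 := sub_eq_zero.mp (hδ.apply_eq_zero h2 hnc x)
  exact ⟨f 1, hfq, map_eq_neg_mul h2 G hfq hid⟩
end

section
/- Let D be a perfect field of characteristic 2 (i.e., every element of D is a square), and suppose f, g : D → D are additive maps satisfying f(x) + x^2 * g(x⁻¹) = 0 for all nonzero x ∈ D. Then there exists a fixed element q ∈ D such that f(x) = x*q and g(x) = -(x*q) for all x ∈ D. -/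
/-!
Writing the relation as `f x = -x² g(x⁻¹)` and applying it to `x`, `x + 1` and `x (x + 1)`, the
partial fraction `(x (x + 1))⁻¹ = x⁻¹ - (x + 1)⁻¹` and additivity give the Hua-type identity
`f (x²) = 2 x f x - x² f 1`. In characteristic two this says `f (x²) = x² f 1`, so `f` is
multiplication by `q = f 1` on squares, i.e. everywhere when every element is a square. The
relation at `x⁻¹` then gives `g x = -x² f (x⁻¹) = -(x q)`.
-/

section

variable {K : Type*} [Field K]

def AddMonoidHom.InvSqRelated (f g : K →+ K) : Prop :=
  ∀ x : K, x ≠ 0 → f x + x ^ 2 * g x⁻¹ = 0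

namespace AddMonoidHom.InvSqRelated

variable {f g : K →+ K}

theorem map_sq (h : InvSqRelated f g) (x : K) : f (x ^ 2) = 2 * x * f x - x ^ 2 * f 1 := by
  rcases eq_or_ne x 0 with rfl | hx
  · simp
  rcases eq_or_ne (x + 1) 0 with hx1 | hx1
  · obtain rfl : x = -1 := eq_neg_of_add_eq_zero_left hx1
    simp only [even_two, Even.neg_pow, one_pow, map_neg]
    ring
  have hinv : (x * (x + 1))⁻¹ = x⁻¹ - (x + 1)⁻¹ := by
    field_simp
    ring
  have hprod := h (x * (x + 1)) (mul_ne_zero hx hx1)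
  rw [hinv, map_sub, show x * (x + 1) = x ^ 2 + x by ring, map_add] at hprod
  linear_combination hprod - (x + 1) ^ 2 * h x hx + x ^ 2 * h (x + 1) hx1
    - x ^ 2 * map_add f x 1

theorem apply_eq_neg_mul (h : InvSqRelated f g) {q : K} (hf : ∀ x, f x = x * q) (x : K) :
    g x = -(x * q) := by
  rcases eq_or_ne x 0 with rfl | hx
  · simp
  have hx' := h x⁻¹ (inv_ne_zero hx)
  rw [inv_inv, hf] at hx'
  field_simp at hx'
  linear_combination hx'

theorem map_sq_of_charTwo [CharP K 2] (h : InvSqRelated f g) (x : K) :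
    f (x ^ 2) = x ^ 2 * f 1 := by
  rw [h.map_sq, CharTwo.two_eq_zero, CharTwo.sub_eq_add]
  ring

end AddMonoidHom.InvSqRelated

end

theorem stmt6 (D : Type*) [Field D] (hchar : ringChar D = 2)
    (hperf : ∀ x : D, ∃ r : D, r ^ 2 = x)
    (f g : D → D)
    (hf : ∀ x y : D, f (x + y) = f x + f y)
    (hg : ∀ x y : D, g (x + y) = g x + g y)
    (hid : ∀ x : D, x ≠ 0 → f x + x ^ 2 * g x⁻¹ = 0) :
    ∃ q : D, (∀ x : D, f x = x * q) ∧ (∀ x : D, g x = -(x * q)) := by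
  have : CharP D 2 := hchar ▸ ringChar.charP D
  have hrel : (AddMonoidHom.mk' f hf).InvSqRelated (AddMonoidHom.mk' g hg) := hid
  have hlin (x : D) : f x = x * f 1 := by
    obtain ⟨r, rfl⟩ := hperf x
    exact hrel.map_sq_of_charTwo r
  exact ⟨f 1, hlin, hrel.apply_eq_neg_mul hlin⟩
end

section
/- Let D = 𝔽₂(t) be the field of rational functions over the field with two elements (in Mathlib, RatFunc (ZMod 2), with t = RatFunc.X). For any A, B ∈ D there is exactly one pair (f, g) of additive functions f, g : D → D satisfying f(1) = A, f(t) = B, and f(x) + x^2 * g(x⁻¹) = 0 for every nonzero x ∈ D. -/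
/-!
Since `t` is not a square and `𝔽₂` is perfect, every `x ∈ 𝔽₂(t)` is uniquely `u² + t v²`:
the elements of this form make up a subfield containing `t`. Additivity of `g` applied to
`1 / (c u (u + 1)) = 1 / (c u) + 1 / (c (u + 1))` forces `f (c u²) = u² f c`, so
`f (u² + t v²) = A u² + B v²`, and `g x = x² f x⁻¹` is then determined by `f`.
Conversely this `f` satisfies `f (w² x) = w² f x`, hence `x² f x⁻¹ = f x`, so `(f, f)` is
a solution.
-/

section CharTwo

variable {K : Type*} [Field K] [CharP K 2]

def sqComb (a b : K) : K × K →+ K where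
  toFun p := a * p.1 ^ 2 + b * p.2 ^ 2
  map_zero' := by simp
  map_add' p q := by simp only [Prod.fst_add, Prod.snd_add, CharTwo.add_sq]; ring

@[simp]
lemma sqComb_apply (a b : K) (p : K × K) : sqComb a b p = a * p.1 ^ 2 + b * p.2 ^ 2 := rfl

lemma sqComb_smul (a b w : K) (p : K × K) : sqComb a b (w • p) = w ^ 2 * sqComb a b p := by
  simp only [sqComb_apply, Prod.smul_fst, Prod.smul_snd, smul_eq_mul]
  ring

lemma sqComb_one_injective {t : K} (ht : ¬IsSquare t) : Function.Injective (sqComb 1 t) := by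
  refine (injective_iff_map_eq_zero _).2 fun ⟨u, v⟩ h ↦ ?_
  simp only [sqComb_apply, one_mul] at h
  have hv : v = 0 := by
    by_contra hv
    refine ht ⟨u / v, ?_⟩
    field_simp
    linear_combination h - u ^ 2 * CharTwo.two_eq_zero (R := K)
  subst hv
  simpa using h

def sqCombSubfield (t : K) : Subfield K where
  carrier := Set.range (sqComb 1 t)
  zero_mem' := ⟨0, map_zero _⟩
  one_mem' := ⟨(1, 0), by simp⟩
  add_mem' := by
    rintro _ _ ⟨p, rfl⟩ ⟨q, rfl⟩
    exact ⟨p + q, map_add _ _ _⟩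
  neg_mem' := by
    rintro _ ⟨p, rfl⟩
    exact ⟨p, (CharTwo.neg_eq _).symm⟩
  mul_mem' := by
    rintro _ _ ⟨⟨u, v⟩, rfl⟩ ⟨⟨a, b⟩, rfl⟩
    refine ⟨(u * a + t * v * b, u * b + v * a), ?_⟩
    simp only [sqComb_apply, CharTwo.add_sq]
    ring
  inv_mem' := by
    rintro _ ⟨p, rfl⟩
    -- `x⁻¹ = (x⁻¹)² x`
    refine ⟨(sqComb 1 t p)⁻¹ • p, ?_⟩
    rcases eq_or_ne (sqComb 1 t p) 0 with h | h
    · simp [h]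
    · rw [sqComb_smul]
      field_simp

section FunctionalEquation

variable {f g : K →+ K}

lemma map_inv_eq_div_sq (hfg : ∀ x : K, x ≠ 0 → f x + x ^ 2 * g x⁻¹ = 0) (x : K) :
    g x⁻¹ = f x / x ^ 2 := by
  rcases eq_or_ne x 0 with rfl | hx
  · simp
  · rw [eq_div_iff (pow_ne_zero 2 hx)]
    linear_combination hfg x hx - f x * CharTwo.two_eq_zero (R := K)

/-- Apply `g` to `1 / (c u (u + 1)) = 1 / (c u) + 1 / (c (u + 1))`. -/
lemma map_mul_sq (hfg : ∀ x : K, x ≠ 0 → f x + x ^ 2 * g x⁻¹ = 0) (c u : K) :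
    f (c * u ^ 2) = u ^ 2 * f c := by
  rcases eq_or_ne c 0 with rfl | hc
  · simp
  rcases eq_or_ne u 0 with rfl | hu
  · simp
  rcases eq_or_ne (u + 1) 0 with hu1 | hu1
  · obtain rfl := CharTwo.add_eq_zero.mp hu1
    simp
  have hsplit : (c * u * (u + 1))⁻¹ = (c * u)⁻¹ + (c * (u + 1))⁻¹ := by
    field_simp
    linear_combination -u * CharTwo.two_eq_zero (R := K)
  have h := congrArg g hsplit
  rw [map_add, map_inv_eq_div_sq hfg, map_inv_eq_div_sq hfg, map_inv_eq_div_sq hfg,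
    show c * u * (u + 1) = c * u ^ 2 + c * u by ring, mul_add_one, map_add, map_add] at h
  field_simp at h
  linear_combination h + (u ^ 2 + u) * f (c * u) * CharTwo.two_eq_zero (R := K)

lemma map_sqComb (hfg : ∀ x : K, x ≠ 0 → f x + x ^ 2 * g x⁻¹ = 0) (t : K) (p : K × K) :
    f (sqComb 1 t p) = sqComb (f 1) (f t) p := by
  have h1 : f (p.1 ^ 2) = p.1 ^ 2 * f 1 := by simpa using map_mul_sq hfg 1 p.1
  simp only [sqComb_apply, one_mul, map_add, h1, map_mul_sq hfg]
  ring

end FunctionalEquation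

section Lift

variable {t : K} (ht : ¬IsSquare t) (hspan : Function.Surjective (sqComb 1 t))

noncomputable def sqCombEquiv : K × K ≃+ K :=
  AddEquiv.ofBijective (sqComb 1 t) ⟨sqComb_one_injective ht, hspan⟩

noncomputable def sqCombLift (A B : K) : K →+ K :=
  (sqComb A B).comp (sqCombEquiv ht hspan).symm.toAddMonoidHom

variable (A B : K)

lemma sqCombLift_sqComb (p : K × K) : sqCombLift ht hspan A B (sqComb 1 t p) = sqComb A B p := by
  change sqComb A B ((sqCombEquiv ht hspan).symm (sqCombEquiv ht hspan p)) = _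
  rw [AddEquiv.symm_apply_apply]

lemma sqCombLift_one : sqCombLift ht hspan A B 1 = A := by
  simpa using sqCombLift_sqComb ht hspan A B (1, 0)

lemma sqCombLift_t : sqCombLift ht hspan A B t = B := by
  simpa using sqCombLift_sqComb ht hspan A B (0, 1)

lemma sqCombLift_sq_mul (w x : K) :
    sqCombLift ht hspan A B (w ^ 2 * x) = w ^ 2 * sqCombLift ht hspan A B x := by
  obtain ⟨p, rfl⟩ := hspan x
  rw [← sqComb_smul, sqCombLift_sqComb, sqCombLift_sqComb, sqComb_smul]

lemma sqCombLift_add_sq_mul_inv (x : K) (hx : x ≠ 0) :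
    sqCombLift ht hspan A B x + x ^ 2 * sqCombLift ht hspan A B x⁻¹ = 0 := by
  rw [show x⁻¹ = x⁻¹ ^ 2 * x by field_simp, sqCombLift_sq_mul, ← mul_assoc, ← mul_pow,
    mul_inv_cancel₀ hx, one_pow, one_mul, CharTwo.add_self_eq_zero]

end Lift

theorem existsUnique_additive_add_sq_mul_inv {t : K} (ht : ¬IsSquare t)
    (hspan : Function.Surjective (sqComb 1 t)) (A B : K) :
    ∃! fg : (K → K) × (K → K),
      (∀ x y : K, fg.1 (x + y) = fg.1 x + fg.1 y) ∧
      (∀ x y : K, fg.2 (x + y) = fg.2 x + fg.2 y) ∧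
      fg.1 1 = A ∧ fg.1 t = B ∧
      (∀ x : K, x ≠ 0 → fg.1 x + x ^ 2 * fg.2 x⁻¹ = 0) := by
  set F := sqCombLift ht hspan A B
  refine ⟨(F, F), ⟨map_add F, map_add F, sqCombLift_one .., sqCombLift_t ..,
    sqCombLift_add_sq_mul_inv ht hspan A B⟩, ?_⟩
  rintro ⟨f₀, g₀⟩ ⟨hf, hg, hf1, hft, hfg⟩
  obtain ⟨f, rfl⟩ : ∃ f : K →+ K, ⇑f = f₀ := ⟨.mk' f₀ hf, rfl⟩
  obtain ⟨g, rfl⟩ : ∃ g : K →+ K, ⇑g = g₀ := ⟨.mk' g₀ hg, rfl⟩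
  have hf_eq : f = F := AddMonoidHom.ext fun x ↦ by
    obtain ⟨p, rfl⟩ := hspan x
    rw [sqCombLift_sqComb, ← hf1, ← hft]
    exact map_sqComb hfg t p
  have hg_eq : g = F := AddMonoidHom.ext fun x ↦
    calc g x = g x⁻¹⁻¹ := by rw [inv_inv]
      _ = f x⁻¹ / x⁻¹ ^ 2 := map_inv_eq_div_sq hfg _
      _ = F x⁻¹⁻¹ := by
        rw [hf_eq, map_inv_eq_div_sq (sqCombLift_add_sq_mul_inv ht hspan A B) x⁻¹]
      _ = F x := by rw [inv_inv]
  rw [hf_eq, hg_eq]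

end CharTwo

namespace RatFunc

variable {F : Type*} [Field F]

lemma not_isSquare_X : ¬IsSquare (X : RatFunc F) := by
  rintro ⟨r, hr⟩
  have hr0 : r ≠ 0 := by
    rintro rfl
    exact X_ne_zero (by simpa using hr)
  have := congrArg intDegree hr
  rw [intDegree_X, intDegree_mul hr0 hr0] at this
  omega

lemma sqComb_one_X_surjective [CharP F 2] [PerfectRing F 2] :
    Function.Surjective (sqComb (1 : RatFunc F) X) := by
  let S := (sqCombSubfield (X : RatFunc F)).toIntermediateField (K := F) fun a ↦ by
    obtain ⟨b, rfl⟩ := surjective_frobenius F 2 a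
    exact ⟨(algebraMap F _ b, 0), by simp [frobenius_def]⟩
  have hS : S = ⊤ := eq_top_iff.2 <| adjoin_X.symm.le.trans <|
    IntermediateField.adjoin_simple_le_iff.2 ⟨(0, 1), by simp⟩
  intro x
  exact (hS ▸ IntermediateField.mem_top : x ∈ S)

end RatFunc

theorem stmt9 (A B : RatFunc (ZMod 2)) :
    ∃! fg : (RatFunc (ZMod 2) → RatFunc (ZMod 2)) × (RatFunc (ZMod 2) → RatFunc (ZMod 2)),
      (∀ x y : RatFunc (ZMod 2), fg.1 (x + y) = fg.1 x + fg.1 y) ∧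
      (∀ x y : RatFunc (ZMod 2), fg.2 (x + y) = fg.2 x + fg.2 y) ∧
      fg.1 1 = A ∧ fg.1 RatFunc.X = B ∧
      (∀ x : RatFunc (ZMod 2), x ≠ 0 → fg.1 x + x ^ 2 * fg.2 x⁻¹ = 0) :=
  existsUnique_additive_add_sq_mul_inv RatFunc.not_isSquare_X RatFunc.sqComb_one_X_surjective A B
end

section
/- Let D be a field of characteristic 2 and let f, g : D → D be additive maps satisfying f(x) + x^2 * g(x⁻¹) = 0 for every nonzero x ∈ D. Then f(a^2 * b) = a^2 * g(b) for all a, b ∈ D. -/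
/-!
Write the hypothesis as `f x = x² g(x⁻¹)`; the relation is symmetric in `f` and `g`. Applying it
to `x (x + 1)` and `x² (x + 1)` and splitting their inverses into partial fractions (signs vanish
in characteristic 2) gives `f (x²) = x² f 1` and then `f (x³) = x² f x`. Polarising the cubic
identity at `x + y` yields `f (x² y) + f (x y²) = x² f y + y² f x`; the same identity for `g` at
`x⁻¹, y⁻¹`, translated back through the hypothesis, gives a second linear relation between
`f (x² y)` and `f (x y²)` whose determinant is `(x + y)²`. Hence `f (x² y) = x² f y`, and finally
`f x = x² g x⁻¹ = g (x² x⁻¹) = g x`.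
-/

section

variable {D : Type*} [Field D]

def InvTwisted (f g : D →+ D) : Prop := ∀ x : D, x ≠ 0 → f x = x ^ 2 * g x⁻¹

theorem InvTwisted.symm {f g : D →+ D} (h : InvTwisted f g) : InvTwisted g f := by
  intro x hx
  rw [h x⁻¹ (inv_ne_zero hx), inv_inv, ← mul_assoc, ← mul_pow, mul_inv_cancel₀ hx, one_pow,
    one_mul]

variable [CharP D 2]

theorem CharTwo.add_one_ne_zero_iff {x : D} : x + 1 ≠ 0 ↔ x ≠ 1 := by
  rw [Ne, CharTwo.add_eq_zero]

theorem CharTwo.inv_mul_add_one {x : D} (hx : x ≠ 0) (hx1 : x + 1 ≠ 0) :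
    (x * (x + 1))⁻¹ = x⁻¹ + (x + 1)⁻¹ := by
  field_simp
  linear_combination -x * CharTwo.two_eq_zero (R := D)

theorem CharTwo.inv_sq_mul_add_one {x : D} (hx : x ≠ 0) (hx1 : x + 1 ≠ 0) :
    (x ^ 2 * (x + 1))⁻¹ = x⁻¹ + x⁻¹ ^ 2 + (x + 1)⁻¹ := by
  field_simp
  linear_combination -(x + x ^ 2) * CharTwo.two_eq_zero (R := D)

namespace InvTwisted

variable {f g : D →+ D}

theorem map_sq (h : InvTwisted f g) (x : D) : f (x ^ 2) = x ^ 2 * f 1 := by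
  rcases eq_or_ne x 0 with rfl | hx
  · simp
  rcases eq_or_ne x 1 with rfl | hx1
  · simp
  have hx1' : x + 1 ≠ 0 := CharTwo.add_one_ne_zero_iff.2 hx1
  have key : f (x ^ 2) + f x = (x + 1) ^ 2 * f x + x ^ 2 * f (x + 1) :=
    calc f (x ^ 2) + f x = f (x * (x + 1)) := by rw [← map_add]; ring_nf
      _ = (x * (x + 1)) ^ 2 * (g x⁻¹ + g (x + 1)⁻¹) := by
        rw [h _ (mul_ne_zero hx hx1'), CharTwo.inv_mul_add_one hx hx1', map_add]
      _ = (x + 1) ^ 2 * (x ^ 2 * g x⁻¹) + x ^ 2 * ((x + 1) ^ 2 * g (x + 1)⁻¹) := by ring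
      _ = _ := by rw [h x hx, h (x + 1) hx1']
  rw [map_add, CharTwo.add_sq, one_pow] at key
  linear_combination key + x ^ 2 * f x * CharTwo.two_eq_zero (R := D)

theorem map_cube (h : InvTwisted f g) (x : D) : f (x ^ 3) = x ^ 2 * f x := by
  rcases eq_or_ne x 0 with rfl | hx
  · simp
  rcases eq_or_ne x 1 with rfl | hx1
  · simp
  have hx1' : x + 1 ≠ 0 := CharTwo.add_one_ne_zero_iff.2 hx1
  have hx2 : x ^ 2 ≠ 0 := pow_ne_zero 2 hx
  have key : f (x ^ 3) + f (x ^ 2) =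
      (x + 1) ^ 2 * x ^ 2 * f x + (x + 1) ^ 2 * f (x ^ 2) + x ^ 4 * f (x + 1) :=
    calc f (x ^ 3) + f (x ^ 2) = f (x ^ 2 * (x + 1)) := by rw [← map_add]; ring_nf
      _ = (x ^ 2 * (x + 1)) ^ 2 * (g x⁻¹ + g (x ^ 2)⁻¹ + g (x + 1)⁻¹) := by
        rw [h _ (mul_ne_zero hx2 hx1'), CharTwo.inv_sq_mul_add_one hx hx1', map_add, map_add,
          inv_pow]
      _ = (x + 1) ^ 2 * x ^ 2 * (x ^ 2 * g x⁻¹) + (x + 1) ^ 2 * ((x ^ 2) ^ 2 * g (x ^ 2)⁻¹)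
          + x ^ 4 * ((x + 1) ^ 2 * g (x + 1)⁻¹) := by ring
      _ = _ := by rw [h x hx, h (x ^ 2) hx2, h (x + 1) hx1']
  rw [map_add, h.map_sq, CharTwo.add_sq, one_pow] at key
  linear_combination key + x ^ 4 * (f x + f 1) * CharTwo.two_eq_zero (R := D)

theorem map_sq_mul_add (h : InvTwisted f g) (x y : D) :
    f (x ^ 2 * y) + f (x * y ^ 2) = x ^ 2 * f y + y ^ 2 * f x := by
  have key := h.map_cube (x + y)
  rw [show (x + y) ^ 3 = x ^ 3 + (x ^ 2 * y + (x * y ^ 2 + y ^ 3)) by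
      linear_combination (x ^ 2 * y + x * y ^ 2) * CharTwo.two_eq_zero (R := D),
    map_add, map_add, map_add, map_add, h.map_cube, h.map_cube, CharTwo.add_sq] at key
  linear_combination key

theorem sq_mul_map_sq_mul_add (h : InvTwisted f g) {x y : D} (hx : x ≠ 0) (hy : y ≠ 0) :
    y ^ 2 * f (x ^ 2 * y) + x ^ 2 * f (x * y ^ 2) = x ^ 2 * y ^ 2 * (f x + f y) := by
  have key := h.symm.map_sq_mul_add x⁻¹ y⁻¹
  rw [h _ (mul_ne_zero (pow_ne_zero 2 hx) hy), h _ (mul_ne_zero hx (pow_ne_zero 2 hy)), h x hx,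
    h y hy]
  simp only [mul_inv]
  field_simp at key ⊢
  linear_combination key

theorem map_sq_mul (h : InvTwisted f g) (x y : D) : f (x ^ 2 * y) = x ^ 2 * f y := by
  rcases eq_or_ne x 0 with rfl | hx
  · simp
  rcases eq_or_ne y 0 with rfl | hy
  · simp
  rcases eq_or_ne x y with rfl | hxy
  · rw [← pow_succ, h.map_cube]
  have hxy2 : x ^ 2 + y ^ 2 ≠ 0 := by
    rw [← CharTwo.add_sq]
    exact pow_ne_zero 2 (mt CharTwo.add_eq_zero.1 hxy)
  refine mul_left_cancel₀ hxy2 ?_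
  linear_combination h.sq_mul_map_sq_mul_add hx hy + x ^ 2 * h.map_sq_mul_add x y
    + (x ^ 2 * y ^ 2 * f x - x ^ 2 * f (x * y ^ 2)) * CharTwo.two_eq_zero (R := D)

theorem eq (h : InvTwisted f g) : f = g := by
  ext x
  rcases eq_or_ne x 0 with rfl | hx
  · simp
  rw [h x hx, ← h.symm.map_sq_mul, sq, mul_assoc, mul_inv_cancel₀ hx, mul_one]

end InvTwisted

end

theorem stmt10 (D : Type*) [Field D] (hchar : ringChar D = 2)
    (f g : D → D)
    (hf : ∀ x y : D, f (x + y) = f x + f y)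
    (hg : ∀ x y : D, g (x + y) = g x + g y)
    (hid : ∀ x : D, x ≠ 0 → f x + x ^ 2 * g x⁻¹ = 0) :
    ∀ a b : D, f (a ^ 2 * b) = a ^ 2 * g b := by
  have : CharP D 2 := ringChar.of_eq hchar
  have h : InvTwisted (.mk' f hf) (.mk' g hg) := fun x hx => CharTwo.add_eq_zero.1 (hid x hx)
  intro a b
  exact (h.map_sq_mul a b).trans (congrArg (a ^ 2 * ·) (DFunLike.congr_fun h.eq b))
end

section
/- Let D be a field of characteristic 2 and let f, g : D → D be additive maps satisfying f(x) + x^2 * g(x⁻¹) = 0 for every nonzero x ∈ D. Then f = g, and consequently f(a^2 * b) = a^2 * f(b) for all a, b ∈ D. -/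
/-!
Write `f x = x² g(x⁻¹)` (the hypothesis, as `-1 = 1`). For `a ≠ 0, t, a + t ≠ 0` put
`u = a (a + t) / t = a² / t + a`; in characteristic 2 its inverse is `a⁻¹ + (a + t)⁻¹`. Expanding
`f u` once by additivity of `f` and once through `g` and the additivity of `g` gives
`t² f(a² / t) = a² f(t)`. With `a = 1` this says `f(t) = t² f(t⁻¹)`, which is the defining
relation of `g` read backwards, so `f = g`; with `t = b⁻¹` it gives `f(a² b) = a² f(b)`.
-/

namespace CharTwo
variable {D : Type*} [Field D] [CharP D 2] {f g : D →+ D}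

theorem sq_mul_map_sq_div_of_map_eq_sq_mul_map_inv (hfg : ∀ x ≠ 0, f x = x ^ 2 * g x⁻¹)
    (a : D) {t : D} (ht : t ≠ 0) : t ^ 2 * f (a ^ 2 / t) = a ^ 2 * f t := by
  rcases eq_or_ne a 0 with rfl | ha
  · simp
  rcases eq_or_ne a t with rfl | hat
  · rw [sq, mul_div_cancel_right₀ _ ht]
  have hs : a + t ≠ 0 := fun h ↦ hat (CharTwo.add_eq_zero.mp h)
  have hg : ∀ x ≠ 0, g x⁻¹ = f x / x ^ 2 := fun x hx ↦ by
    rw [hfg x hx, mul_div_cancel_left₀ _ (pow_ne_zero 2 hx)]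
  have hu : a * (a + t) / t = a ^ 2 / t + a := by field_simp
  have hu_inv : (a * (a + t) / t)⁻¹ = a⁻¹ + (a + t)⁻¹ := by
    rw [inv_add_inv ha hs, CharTwo.add_cancel_left, inv_div]
  have hfu : t ^ 2 * (f (a ^ 2 / t) + f a) = (a + t) ^ 2 * f a + a ^ 2 * f (a + t) := by
    rw [← map_add, ← hu, hfg _ (by positivity), hu_inv, map_add, hg a ha, hg _ hs]
    field_simp
  linear_combination
    hfu + a ^ 2 * map_add f a t + (a * t + a ^ 2) * f a * CharTwo.two_eq_zero (R := D)

theorem sq_mul_map_inv_of_map_eq_sq_mul_map_inv (hfg : ∀ x ≠ 0, f x = x ^ 2 * g x⁻¹)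
    {t : D} (ht : t ≠ 0) : t ^ 2 * f t⁻¹ = f t := by
  simpa using sq_mul_map_sq_div_of_map_eq_sq_mul_map_inv hfg 1 ht

theorem eq_of_map_eq_sq_mul_map_inv (hfg : ∀ x ≠ 0, f x = x ^ 2 * g x⁻¹) : f = g := by
  ext x
  rcases eq_or_ne x 0 with rfl | hx
  · simp
  rw [← sq_mul_map_inv_of_map_eq_sq_mul_map_inv hfg hx, hfg _ (inv_ne_zero hx), inv_inv]
  field_simp

theorem map_sq_mul_of_map_eq_sq_mul_map_inv (hfg : ∀ x ≠ 0, f x = x ^ 2 * g x⁻¹) (a b : D) :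
    f (a ^ 2 * b) = a ^ 2 * f b := by
  rcases eq_or_ne b 0 with rfl | hb
  · simp
  have h := sq_mul_map_sq_div_of_map_eq_sq_mul_map_inv hfg a (inv_ne_zero hb)
  rw [div_inv_eq_mul, inv_pow, inv_mul_eq_iff_eq_mul₀ (pow_ne_zero 2 hb)] at h
  rw [h, ← sq_mul_map_inv_of_map_eq_sq_mul_map_inv hfg hb]
  ring

end CharTwo

theorem stmt11 (D : Type*) [Field D] (hchar : ringChar D = 2)
    (f g : D → D)
    (hf : ∀ x y : D, f (x + y) = f x + f y)
    (hg : ∀ x y : D, g (x + y) = g x + g y)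
    (hid : ∀ x : D, x ≠ 0 → f x + x ^ 2 * g x⁻¹ = 0) :
    f = g ∧ ∀ a b : D, f (a ^ 2 * b) = a ^ 2 * f b := by
  have : CharP D 2 := ringChar.of_eq hchar
  have hfg : ∀ x ≠ 0, AddMonoidHom.mk' f hf x = x ^ 2 * AddMonoidHom.mk' g hg x⁻¹ :=
    fun x hx ↦ CharTwo.add_eq_zero.mp (hid x hx)
  exact ⟨congrArg (⇑) (CharTwo.eq_of_map_eq_sq_mul_map_inv hfg),
    CharTwo.map_sq_mul_of_map_eq_sq_mul_map_inv hfg⟩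
end

section
/- Let D = 𝔽₂(t) be the field of rational functions over 𝔽₂ (RatFunc (ZMod 2), t = RatFunc.X), let A, B ∈ D, and let f, g : D → D be additive maps with f(1) = A, f(t) = B, satisfying f(x) + x^2 * g(x⁻¹) = 0 for every nonzero x ∈ D. Then for every polynomial P over 𝔽₂ and every integer p, writing P(t²) for the image in D of P evaluated at t², one has f(P(t²) * t^(2p)) = P(t²) * t^(2p) * A and f(P(t²) * t^(2p+1)) = P(t²) * t^(2p) * B (here t^(n) for n ∈ ℤ denotes the integer power zpow in the field D). In particular, f(t^(2n)) = t^(2n) * A and f(t^(2n+1)) = t^(2n) * B for all n ∈ ℤ. -/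
/-!
In characteristic 2 the hypothesis says `f x = x ^ 2 * g x⁻¹`. Since
`(s y)⁻¹ + ((s + 1) y)⁻¹ = (s (s + 1) y)⁻¹`, additivity of `g` turns this into
`f (s ^ 2 * y) = s ^ 2 * f y`, so `f` is semilinear over the subfield of squares.
Over `𝔽₂`, `P(t²) t^(2p) = (P(t) t^p) ^ 2` is a square, and the values of `f` at it and at
its product with `t` are therefore determined by `f 1 = A` and `f t = B`.
-/

open Polynomial

section CharTwo

variable {K : Type*} [Field K] [CharP K 2]

theorem inv_mul_add_inv_add_one_mul {s y : K} (hs : s ≠ 0) (hs1 : s + 1 ≠ 0) (hy : y ≠ 0) :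
    (s * y)⁻¹ + ((s + 1) * y)⁻¹ = (s * (s + 1) * y)⁻¹ := by
  field_simp
  linear_combination s * (CharTwo.two_eq_zero : (2 : K) = 0)

variable {f g : K →+ K} (hfg : ∀ x : K, x ≠ 0 → f x + x ^ 2 * g x⁻¹ = 0)
include hfg

theorem apply_eq_sq_mul_apply_inv (x : K) : f x = x ^ 2 * g x⁻¹ := by
  rcases eq_or_ne x 0 with rfl | hx
  · simp
  · exact CharTwo.add_eq_zero.mp (hfg x hx)

theorem apply_sq_mul (s y : K) : f (s ^ 2 * y) = s ^ 2 * f y := by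
  rcases eq_or_ne y 0 with rfl | hy
  · simp
  rcases eq_or_ne s 0 with rfl | hs
  · simp
  rcases eq_or_ne (s + 1) 0 with hs1 | hs1
  · obtain rfl : s = 1 := CharTwo.add_eq_zero.mp hs1
    simp
  have hf := apply_eq_sq_mul_apply_inv hfg
  have key : f (s * (s + 1) * y) = (s + 1) ^ 2 * f (s * y) + s ^ 2 * f ((s + 1) * y) := by
    rw [hf, hf (s * y), hf ((s + 1) * y), ← inv_mul_add_inv_add_one_mul hs hs1 hy, map_add]
    ring
  have hsy : f (s * (s + 1) * y) = f (s ^ 2 * y) + f (s * y) := by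
    rw [← map_add]; congr 1; ring
  have hs1y : f ((s + 1) * y) = f (s * y) + f y := by
    rw [← map_add]; congr 1; ring
  rw [hsy, hs1y] at key
  linear_combination key + (s ^ 2 + s) * f (s * y) * (CharTwo.two_eq_zero : (2 : K) = 0)

end CharTwo

theorem algebraMap_comp_X_sq_mul_X_zpow_eq_sq (P : (ZMod 2)[X]) (p : ℤ) :
    algebraMap (ZMod 2)[X] (RatFunc (ZMod 2)) (P.comp (X ^ 2)) * RatFunc.X ^ (2 * p) =
      (algebraMap (ZMod 2)[X] (RatFunc (ZMod 2)) P * RatFunc.X ^ p) ^ 2 := by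
  rw [← expand_eq_comp_X_pow, ZMod.expand_card, map_pow, mul_pow, mul_comm 2 p, zpow_mul,
    zpow_ofNat]

theorem stmt12 (A B : RatFunc (ZMod 2))
    (f g : RatFunc (ZMod 2) → RatFunc (ZMod 2))
    (hf : ∀ x y : RatFunc (ZMod 2), f (x + y) = f x + f y)
    (hg : ∀ x y : RatFunc (ZMod 2), g (x + y) = g x + g y)
    (hf1 : f 1 = A) (hft : f RatFunc.X = B)
    (hid : ∀ x : RatFunc (ZMod 2), x ≠ 0 → f x + x ^ 2 * g x⁻¹ = 0) :
    (∀ (P : (ZMod 2)[X]) (p : ℤ),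
      f (algebraMap ((ZMod 2)[X]) (RatFunc (ZMod 2)) (P.comp (X ^ 2)) *
          RatFunc.X ^ (2 * p)) =
        algebraMap ((ZMod 2)[X]) (RatFunc (ZMod 2)) (P.comp (X ^ 2)) *
          RatFunc.X ^ (2 * p) * A ∧
      f (algebraMap ((ZMod 2)[X]) (RatFunc (ZMod 2)) (P.comp (X ^ 2)) *
          RatFunc.X ^ (2 * p + 1)) =
        algebraMap ((ZMod 2)[X]) (RatFunc (ZMod 2)) (P.comp (X ^ 2)) *
          RatFunc.X ^ (2 * p) * B) ∧
    (∀ n : ℤ,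
      f (RatFunc.X ^ (2 * n)) = RatFunc.X ^ (2 * n) * A ∧
      f (RatFunc.X ^ (2 * n + 1)) = RatFunc.X ^ (2 * n) * B) := by
  have hsq := apply_sq_mul (f := AddMonoidHom.mk' f hf) (g := AddMonoidHom.mk' g hg) hid
  simp only [AddMonoidHom.mk'_apply] at hsq
  have hsq_one (s : RatFunc (ZMod 2)) : f (s ^ 2) = s ^ 2 * A := by
    simpa [hf1] using hsq s 1
  have hsq_X (s : RatFunc (ZMod 2)) : f (s ^ 2 * RatFunc.X) = s ^ 2 * B := by
    rw [hsq, hft]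
  refine ⟨fun P p => ?_, fun n => ?_⟩ <;> rw [zpow_add_one₀ RatFunc.X_ne_zero]
  · rw [← mul_assoc, algebraMap_comp_X_sq_mul_X_zpow_eq_sq]
    exact ⟨hsq_one _, hsq_X _⟩
  · rw [mul_comm 2 n, zpow_mul, zpow_ofNat]
    exact ⟨hsq_one _, hsq_X _⟩
end

section
/- Let D = 𝔽₂(t) be the field of rational functions over 𝔽₂ (RatFunc (ZMod 2), t = RatFunc.X), let A, B ∈ D, and let f, g : D → D be additive maps with f(1) = A, f(t) = B, satisfying f(x) + x^2 * g(x⁻¹) = 0 for every nonzero x ∈ D. Then for all polynomials P, Q, R, S over 𝔽₂ with R(t²) + S(t²)·t ≠ 0 in D, one has f( (P(t²) + Q(t²)·t) / (R(t²) + S(t²)·t) ) = ( (P(t)·R(t) + Q(t)·S(t)·t) / (R(t²) + S(t²)·t) )^2 · A + ( (P(t)·S(t) + Q(t)·R(t)) / (R(t²) + S(t²)·t) )^2 · B, where P(t), P(t²), etc. denote the images in D of P evaluated at t and at t² respectively. -/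
/-!
In characteristic 2 the relation reads `f x / x ^ 2 = g x⁻¹`, so `x ↦ f x / x ^ 2` is additive as a
function of `x⁻¹`. Feeding this the reciprocal splittings behind `x²y/(x+1) = xy + xy/(x+1)` shows
that `f` is semilinear over the squares: `f (x ^ 2 * y) = x ^ 2 * f y`. Hence `f (u² + v² t)` is
`u² f 1 + v² f t`, and `(p² + q² t)/(r² + s² t)` is of that form with `u`, `v` as in the statement,
since `(p r + q s t)² + (p s + q r)² t = (p² + q² t)(r² + s² t)` in characteristic 2.
-/

open Polynomial

namespace CharTwo

variable {K : Type*} [Field K] [CharP K 2]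

theorem div_eq_sq_add_sq_mul (p q r s t : K) :
    (p ^ 2 + q ^ 2 * t) / (r ^ 2 + s ^ 2 * t) =
      ((p * r + q * s * t) / (r ^ 2 + s ^ 2 * t)) ^ 2 +
        ((p * s + q * r) / (r ^ 2 + s ^ 2 * t)) ^ 2 * t := by
  rcases eq_or_ne (r ^ 2 + s ^ 2 * t) 0 with hD | hD
  · simp [hD]
  rw [div_pow, div_pow, div_mul_eq_mul_div, ← add_div, div_eq_div_iff hD (pow_ne_zero 2 hD)]
  linear_combination (-2 * p * q * r * s * t * (r ^ 2 + s ^ 2 * t)) * two_eq_zero (R := K)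

variable {f g : K →+ K} (hfg : ∀ x : K, x ≠ 0 → f x + x ^ 2 * g x⁻¹ = 0)
include hfg

theorem apply_inv_eq_div_sq (x : K) : g x⁻¹ = f x / x ^ 2 := by
  rcases eq_or_ne x 0 with rfl | hx
  · simp
  rw [eq_div_iff (pow_ne_zero 2 hx)]
  linear_combination hfg x hx - f x * two_eq_zero (R := K)

theorem div_sq_eq_add_of_inv_eq_add {a b c : K} (h : c⁻¹ = a⁻¹ + b⁻¹) :
    f c / c ^ 2 = f a / a ^ 2 + f b / b ^ 2 := by
  rw [← apply_inv_eq_div_sq hfg, ← apply_inv_eq_div_sq hfg, ← apply_inv_eq_div_sq hfg, h, map_add]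

theorem map_sq_mul (x y : K) : f (x ^ 2 * y) = x ^ 2 * f y := by
  rcases eq_or_ne x 0 with rfl | hx
  · simp
  rcases eq_or_ne y 0 with rfl | hy
  · simp
  rcases eq_or_ne x 1 with rfl | hx1
  · simp
  have hw : x + 1 ≠ 0 := fun h => hx1 (by linear_combination h - two_eq_zero (R := K))
  have hx2y := div_sq_eq_add_of_inv_eq_add hfg (a := x * y) (b := x ^ 2 * y)
    (c := x ^ 2 * y / (x + 1)) (by field_simp)
  have hxy := div_sq_eq_add_of_inv_eq_add hfg (a := x * y) (b := y)
    (c := x * y / (x + 1)) (by field_simp; ring)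
  have hsplit : f (x ^ 2 * y / (x + 1)) = f (x * y) + f (x * y / (x + 1)) := by
    rw [← map_add, add_div' _ _ _ hw]
    congr 1
    rw [div_left_inj' hw]
    linear_combination -(x * y) * two_eq_zero (R := K)
  field_simp at hx2y hxy
  linear_combination hxy - hx2y + (x + 1) ^ 2 * hsplit + (x + 1) * f (x * y) * two_eq_zero (R := K)

theorem map_sq_add_sq_mul (u v t : K) : f (u ^ 2 + v ^ 2 * t) = u ^ 2 * f 1 + v ^ 2 * f t := by
  rw [map_add, ← map_sq_mul hfg, ← map_sq_mul hfg, mul_one]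

end CharTwo

theorem stmt13 (A B : RatFunc (ZMod 2))
    (f g : RatFunc (ZMod 2) → RatFunc (ZMod 2))
    (hf : ∀ x y : RatFunc (ZMod 2), f (x + y) = f x + f y)
    (hg : ∀ x y : RatFunc (ZMod 2), g (x + y) = g x + g y)
    (hf1 : f 1 = A) (hft : f RatFunc.X = B)
    (hid : ∀ x : RatFunc (ZMod 2), x ≠ 0 → f x + x ^ 2 * g x⁻¹ = 0) :
    ∀ P Q R S : (ZMod 2)[X],
      let φ : (ZMod 2)[X] → RatFunc (ZMod 2) :=
        fun F => algebraMap ((ZMod 2)[X]) (RatFunc (ZMod 2)) F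
      φ (R.comp (X ^ 2)) + φ (S.comp (X ^ 2)) * RatFunc.X ≠ 0 →
      f ((φ (P.comp (X ^ 2)) + φ (Q.comp (X ^ 2)) * RatFunc.X) /
          (φ (R.comp (X ^ 2)) + φ (S.comp (X ^ 2)) * RatFunc.X)) =
        ((φ (P * R) + φ (Q * S) * RatFunc.X) /
            (φ (R.comp (X ^ 2)) + φ (S.comp (X ^ 2)) * RatFunc.X)) ^ 2 * A +
        ((φ (P * S + Q * R)) /
            (φ (R.comp (X ^ 2)) + φ (S.comp (X ^ 2)) * RatFunc.X)) ^ 2 * B := by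
  intro P Q R S φ _
  have hφ : ∀ F : (ZMod 2)[X], φ (F.comp (X ^ 2)) = φ F ^ 2 := fun F => by
    simp only [φ, ← expand_eq_comp_X_pow, ZMod.expand_card, map_pow]
  simp only [hφ, φ, map_add, map_mul]
  rw [CharTwo.div_eq_sq_add_sq_mul, ← hf1, ← hft]
  exact CharTwo.map_sq_add_sq_mul (f := AddMonoidHom.mk' f hf) (g := AddMonoidHom.mk' g hg) hid _ _ _
end

section
/- Let P, Q, R, S, P', Q', R', S' be polynomials over 𝔽₂ = ZMod 2 and write, for a polynomial F, F₂ := F.comp(X^2) ∈ (ZMod 2)[X]. If (P₂ + Q₂·X)·(R'₂ + S'₂·X) = (P'₂ + Q'₂·X)·(R₂ + S₂·X) in (ZMod 2)[X], then both (P·R + Q·S·X)·(R'₂ + S'₂·X) = (P'·R' + Q'·S'·X)·(R₂ + S₂·X) and (P·S + Q·R)·(R'₂ + S'₂·X) = (P'·S' + Q'·R')·(R₂ + S₂·X) hold in (ZMod 2)[X]. -/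
/-!
Over `𝔽₂` the Frobenius fixes coefficients, so `F.comp (X ^ 2) = F ^ 2` and the hypothesis reads
`(P² + Q²X)(R'² + S'²X) = (P'² + Q'²X)(R² + S²X)`. In characteristic two a product of two
polynomials of the form `a² + b²X` is again of that form, namely `(ac + bdX)² + (ad + bc)²X`, and
a polynomial has at most one such representation (compare degree parities). Hence
`PR' + QS'X = P'R + Q'SX` and `PS' + QR' = P'S + Q'R`, and both conclusions are linear
combinations of these two identities.
-/

open Polynomial

theorem ZMod.comp_X_pow_eq_pow {p : ℕ} [Fact p.Prime] (F : (ZMod p)[X]) :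
    F.comp (X ^ p) = F ^ p := by
  rw [← expand_eq_comp_X_pow, ZMod.expand_card]

theorem CharTwo.sq_add_sq_mul_mul_sq_add_sq_mul {R : Type*} [CommRing R] [CharP R 2]
    (a b c d x : R) :
    (a ^ 2 + b ^ 2 * x) * (c ^ 2 + d ^ 2 * x) = (a * c + b * d * x) ^ 2 + (a * d + b * c) ^ 2 * x := by
  grind

namespace Polynomial

variable {R : Type*} [CommRing R] [IsDomain R]

theorem eq_zero_of_sq_eq_sq_mul_X {A B : R[X]} (h : A ^ 2 = B ^ 2 * X) : A = 0 ∧ B = 0 := by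
  by_cases hB : B = 0
  · subst hB
    exact ⟨pow_eq_zero_iff two_ne_zero |>.mp (by simpa using h), rfl⟩
  · have hA : A ≠ 0 := by
      rintro rfl
      simp [hB, X_ne_zero] at h
    have hdeg := congrArg natDegree h
    rw [natDegree_pow, natDegree_mul (pow_ne_zero _ hB) X_ne_zero, natDegree_pow, natDegree_X] at hdeg
    omega

theorem eq_and_eq_of_sq_add_sq_mul_X [CharP R 2] {A B C D : R[X]}
    (h : A ^ 2 + B ^ 2 * X = C ^ 2 + D ^ 2 * X) : A = C ∧ B = D := by
  have hsum : (A + C) ^ 2 = (B + D) ^ 2 * X := by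
    rw [CharTwo.add_sq, CharTwo.add_sq]
    grind
  obtain ⟨hAC, hBD⟩ := eq_zero_of_sq_eq_sq_mul_X hsum
  exact ⟨CharTwo.add_eq_zero.mp hAC, CharTwo.add_eq_zero.mp hBD⟩

end Polynomial

theorem stmt14 (P Q R S P' Q' R' S' : (ZMod 2)[X])
    (h : (P.comp (X ^ 2) + Q.comp (X ^ 2) * X) * (R'.comp (X ^ 2) + S'.comp (X ^ 2) * X) =
         (P'.comp (X ^ 2) + Q'.comp (X ^ 2) * X) * (R.comp (X ^ 2) + S.comp (X ^ 2) * X)) :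
    (P * R + Q * S * X) * (R'.comp (X ^ 2) + S'.comp (X ^ 2) * X) =
      (P' * R' + Q' * S' * X) * (R.comp (X ^ 2) + S.comp (X ^ 2) * X) ∧
    (P * S + Q * R) * (R'.comp (X ^ 2) + S'.comp (X ^ 2) * X) =
      (P' * S' + Q' * R') * (R.comp (X ^ 2) + S.comp (X ^ 2) * X) := by
  simp only [ZMod.comp_X_pow_eq_pow] at h ⊢
  rw [CharTwo.sq_add_sq_mul_mul_sq_add_sq_mul, mul_comm (P' ^ 2 + _),
    CharTwo.sq_add_sq_mul_mul_sq_add_sq_mul] at h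
  obtain ⟨h₁, h₂⟩ := eq_and_eq_of_sq_add_sq_mul_X h
  constructor
  · linear_combination (norm := grind) (R * R' + S * S' * X) * h₁ + (R * S' + S * R') * X * h₂
  · linear_combination (norm := grind) (R * S' + S * R') * h₁ + (R * R' + S * S' * X) * h₂
end

section
/- Let D = 𝔽₂(t) be the field of rational functions over 𝔽₂ (RatFunc (ZMod 2), t = RatFunc.X). For any A, B ∈ D there exists an additive function f : D → D with f(1) = A, f(t) = B, such that f(x) + x^2 * f(x⁻¹) = 0 for every nonzero x ∈ D (so the pair (f, g) with g = f satisfies the identity f(x) + x^2 * g(x⁻¹) = 0 for all nonzero x). -/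
/-!
Over the subfield `K = D²` of squares, `1` and `t` are linearly independent (`t` is not a square,
having odd degree), so there is a `K`-linear map `f : D → D` with `f 1 = A` and `f t = B`.
Any such map satisfies `f x⁻¹ = f (x⁻² • x) = x⁻² f x`, hence `f x + x² f x⁻¹ = 2 f x = 0`.
-/

open RatFunc

theorem LinearIndependent.exists_linearMap_apply_eq {K V V' ι : Type*} [DivisionRing K]
    [AddCommGroup V] [Module K V] [AddCommGroup V'] [Module K V'] {v : ι → V}
    (hv : LinearIndependent K v) (w : ι → V') : ∃ f : V →ₗ[K] V', ∀ i, f (v i) = w i := by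
  obtain ⟨f, hf⟩ := LinearMap.exists_extend ((Finsupp.linearCombination K w).comp hv.repr)
  refine ⟨f, fun i => ?_⟩
  have := LinearMap.congr_fun hf ⟨v i, Submodule.subset_span (Set.mem_range_self i)⟩
  simpa [hv.repr_eq_single i ⟨v i, Submodule.subset_span (Set.mem_range_self i)⟩ rfl] using this

theorem linearIndependent_one_pair_iff {K L : Type*} [Field K] [Field L] [Algebra K L] (a : L) :
    LinearIndependent K ![1, a] ↔ a ∉ Set.range (algebraMap K L) := by
  simp [LinearIndependent.pair_iff' one_ne_zero, Algebra.smul_def]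

theorem RatFunc.sq_ne_X {K : Type*} [Field K] (y : RatFunc K) : y ^ 2 ≠ X := by
  intro h
  have hy : y ≠ 0 := by rintro rfl; exact X_ne_zero (by simpa using h.symm)
  have := intDegree_mul hy hy
  rw [← sq, h, intDegree_X] at this
  omega

theorem LinearMap.map_inv_of_sq_mem {F : Type*} [Field F] {K : Subfield F}
    (hK : ∀ x : F, x ^ 2 ∈ K) (f : F →ₗ[K] F) (x : F) : f x⁻¹ = x⁻¹ ^ 2 * f x := by
  by_cases hx : x = 0
  · simp [hx]
  · have : x⁻¹ = (⟨x⁻¹ ^ 2, hK _⟩ : K) • x := by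
      rw [Subfield.smul_def, smul_eq_mul]; field_simp
    conv_lhs => rw [this, f.map_smul]
    rfl

theorem LinearMap.apply_add_sq_mul_apply_inv {F : Type*} [Field F] [CharP F 2] {K : Subfield F}
    (hK : ∀ x : F, x ^ 2 ∈ K) (f : F →ₗ[K] F) {x : F} (hx : x ≠ 0) :
    f x + x ^ 2 * f x⁻¹ = 0 := by
  rw [f.map_inv_of_sq_mem hK, ← mul_assoc, ← mul_pow, mul_inv_cancel₀ hx,
    one_pow, one_mul, CharTwo.add_self_eq_zero]

theorem stmt15 (A B : RatFunc (ZMod 2)) :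
    ∃ f : RatFunc (ZMod 2) → RatFunc (ZMod 2),
      (∀ x y : RatFunc (ZMod 2), f (x + y) = f x + f y) ∧
      f 1 = A ∧ f RatFunc.X = B ∧
      (∀ x : RatFunc (ZMod 2), x ≠ 0 → f x + x ^ 2 * f x⁻¹ = 0) := by
  set K := (frobenius (RatFunc (ZMod 2)) 2).fieldRange
  have hK : ∀ y : RatFunc (ZMod 2), y ^ 2 ∈ K := fun y => ⟨y, rfl⟩
  have hX : X ∉ Set.range (algebraMap K (RatFunc (ZMod 2))) := by
    rintro ⟨⟨_, y, rfl⟩, hy⟩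
    exact sq_ne_X y hy
  obtain ⟨f, hf⟩ :=
    ((linearIndependent_one_pair_iff X).2 hX).exists_linearMap_apply_eq ![A, B]
  exact ⟨f, f.map_add, hf 0, hf 1, fun x hx => f.apply_add_sq_mul_apply_inv hK hx⟩
end
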